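/- arXiv:1302.3064 — 3 statements merged into one kernel-verified Lean document; each statement's English description precedes it below -/
import Mathlib

section
/- Let e = (u,v) be an edge of a graph H such that the vertex w is isolated in H − N_H[e] (e is an isolating edge with respect to w). If moreover w has a neighbor x of degree two in H, then reg(H) = reg(H − e). -/
open scoped Classical

noncomputable section

/-! ## Simplicial complexes and Castelnuovo–Mumford regularity -/

/-- A (abstract) simplicial complex on the vertex type `V`, given as a
downward closed family of finsets. -/
def IsComplex {V : Type} (Δ : Finset V → Prop) : Prop :=
  ∀ ⦃F G : Finset V⦄, Δ F → G ⊆ F → Δ G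

/-- The faces of cardinality `n` of a family `Δ` (faces of card `n` are the
`(n-1)`-dimensional simplices). -/
def Faces {V : Type} (Δ : Finset V → Prop) (n : ℕ) : Type :=
  {F : Finset V // Δ F ∧ F.card = n}

/-- The simplicial boundary map of the (augmented) chain complex of `Δ` over
a field `k`, from chains on faces of card `n+1` to chains on faces of card `n`,
with signs determined by a linear order on the vertices. -/
def cxBoundary {V : Type} (k : Type) [Field k] [LinearOrder V]
    (Δ : Finset V → Prop) (n : ℕ) :
    (Faces Δ (n + 1) →₀ k) →ₗ[k] (Faces Δ n →₀ k) :=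
  Finsupp.lsum k fun F => LinearMap.toSpanSingleton k _
    (∑ x ∈ F.1.attach,
      ((-1 : k) ^ (F.1.filter (fun z => z < x.1)).card) •
        (if h : Δ (F.1.erase x.1) ∧ (F.1.erase x.1).card = n then
          Finsupp.single (⟨F.1.erase x.1, h⟩ : Faces Δ n) (1 : k) else 0))

/-- Cycles in chain degree `j` (faces of card `j`); in the bottom degree every
chain is a cycle (augmented complex). -/
def cxCycles {V : Type} (k : Type) [Field k] [LinearOrder V]
    (Δ : Finset V → Prop) : (j : ℕ) → Submodule k (Faces Δ j →₀ k)
  | 0 => ⊤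
  | (n + 1) => LinearMap.ker (cxBoundary k Δ n)

/-- Nonvanishing of the reduced homology `H̃_{j-1}(Δ; k)`: there is a cycle
supported on faces of cardinality `j` that is not a boundary. -/
def HNontrivial {V : Type} (k : Type) [Field k] [LinearOrder V]
    (Δ : Finset V → Prop) (j : ℕ) : Prop :=
  ¬ (cxCycles k Δ j ≤ LinearMap.range (cxBoundary k Δ j))

/-- The induced subcomplex `Δ[S]` on a set `S` of vertices. -/
def restrictC {V : Type} (Δ : Finset V → Prop) (S : Set V) : Finset V → Prop :=
  fun F => ↑F ⊆ S ∧ Δ F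

/-- The Castelnuovo–Mumford regularity of `Δ` over the field `k`:
the largest `j` such that `H̃_{j-1}(Δ[S]; k) ≠ 0` for some subset `S` of the
vertices. -/
def regC {V : Type} [Fintype V] (k : Type) [Field k] (Δ : Finset V → Prop) : ℕ :=
  letI : LinearOrder V :=
    LinearOrder.lift' (Fintype.equivFin V) (Fintype.equivFin V).injective
  sSup {j : ℕ | ∃ S : Set V, HNontrivial k (restrictC Δ S) j}

/-- The deletion `del_Δ(x)`. -/
def delC {V : Type} (Δ : Finset V → Prop) (x : V) : Finset V → Prop :=
  fun F => Δ F ∧ x ∉ F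

/-- The link `lk_Δ(x)`. -/
def lkC {V : Type} (Δ : Finset V → Prop) (x : V) : Finset V → Prop :=
  fun F => x ∉ F ∧ Δ (insert x F)

/-! ## Independence complexes and regularity of graphs -/

/-- The independence complex of a graph, as a family of finsets. -/
def indepFaces {V : Type} (G : SimpleGraph V) : Finset V → Prop :=
  fun F => ∀ u ∈ F, ∀ v ∈ F, ¬ G.Adj u v

/-- The regularity `reg(G)` of a graph: the regularity of its independence
complex over `k`. -/
def gReg {V : Type} [Fintype V] (k : Type) [Field k] (G : SimpleGraph V) : ℕ :=
  regC k (indepFaces G)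

/-- The regularity of the subgraph of `G` induced on the vertex set `S`. -/
def gRegOn {V : Type} [Fintype V] (k : Type) [Field k] (G : SimpleGraph V)
    (S : Set V) : ℕ :=
  regC k (restrictC (indepFaces G) S)

/-! ## Geometric realization, suspension, wedge -/

/-- The geometric realization of a family of finsets `Δ` on a finite vertex
type: convex combinations of vertices supported on a face. -/
abbrev cxSpace {V : Type} [Fintype V] (Δ : Finset V → Prop) : Type :=
  {f : V → ℝ // (∃ F : Finset V, Δ F ∧ ∀ v, f v ≠ 0 → v ∈ F) ∧
    (∀ v, 0 ≤ f v) ∧ ∑ v, f v = 1}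

/-- Relation generating the unreduced suspension: the two ends of the cylinder
are collapsed to two (always present) poles. -/
def suspRel (X : Type) : (X × unitInterval ⊕ Bool) → (X × unitInterval ⊕ Bool) → Prop
  | Sum.inl (x, t), Sum.inr b => (t = 0 ∧ b = false) ∨ (t = 1 ∧ b = true)
  | _, _ => False

/-- The unreduced suspension `Σ X` (the join of `X` with a two-point space). -/
abbrev Susp (X : Type) [TopologicalSpace X] : Type := Quot (suspRel X)

/-- Relation generating the wedge sum with respect to chosen basepoints. -/
def wedgeRel (X Y : Type) (x₀ : X) (y₀ : Y) : X ⊕ Y → X ⊕ Y → Prop :=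
  fun p q => p = Sum.inl x₀ ∧ q = Sum.inr y₀

/-- The wedge sum `X ∨ Y` with respect to chosen basepoints. -/
abbrev Wedge (X Y : Type) [TopologicalSpace X] [TopologicalSpace Y]
    (x₀ : X) (y₀ : Y) : Type := Quot (wedgeRel X Y x₀ y₀)

/-! ## Graph invariants -/

/-- `M` is an induced matching of `G`: a set of edges, pairwise with distinct
endpoints and with no edge of `G` between the endpoints of distinct members. -/
def IsInducedMatching {V : Type} (G : SimpleGraph V) (M : Finset (V × V)) : Prop :=
  (∀ p ∈ M, G.Adj p.1 p.2) ∧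
    ∀ p ∈ M, ∀ q ∈ M, p ≠ q →
      p.1 ≠ q.1 ∧ p.1 ≠ q.2 ∧ p.2 ≠ q.1 ∧ p.2 ≠ q.2 ∧
      ¬ G.Adj p.1 q.1 ∧ ¬ G.Adj p.1 q.2 ∧ ¬ G.Adj p.2 q.1 ∧ ¬ G.Adj p.2 q.2

/-- The induced matching number `im(G)`. -/
def inducedMatchingNumber {V : Type} (G : SimpleGraph V) : ℕ :=
  sSup {n : ℕ | ∃ M : Finset (V × V), IsInducedMatching G M ∧ M.card = n}

/-- The independence number `α(G)`. -/
def indepNumber {V : Type} (G : SimpleGraph V) : ℕ :=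
  sSup {n : ℕ | ∃ s : Finset V, (∀ u ∈ s, ∀ v ∈ s, ¬ G.Adj u v) ∧ s.card = n}

/-- The decycling number `∇(G)`: the least size of a set of vertices whose
removal leaves an acyclic graph. -/
def decyclingNumber {V : Type} [Fintype V] (G : SimpleGraph V) : ℕ :=
  sInf {n : ℕ | ∃ D : Finset V, D.card = n ∧
    (G.induce {v : V | v ∉ D}).IsAcyclic}

/-- `K` contains an induced cycle on `n` vertices. -/
def HasInducedCycle {V : Type} (K : SimpleGraph V) (n : ℕ) : Prop :=
  ∃ f : Fin n ↪ V, ∀ i j : Fin n,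
    K.Adj (f i) (f j) ↔ ((j : ℕ) = ((i : ℕ) + 1) % n ∨ (i : ℕ) = ((j : ℕ) + 1) % n)

/-- A graph is cochordal if its complement is chordal, i.e. the complement has
no induced cycle of length at least `4`. -/
def Cochordal {V : Type} (H : SimpleGraph V) : Prop :=
  ∀ n : ℕ, 4 ≤ n → ¬ HasInducedCycle Hᶜ n

/-- The cochordal cover number `cochord(G)`: the least number of cochordal
subgraphs of `G` whose edge sets cover the edges of `G`. -/
def cochordCover {V : Type} (G : SimpleGraph V) : ℕ :=
  sInf {r : ℕ | ∃ H : Fin r → SimpleGraph V,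
    (∀ i, H i ≤ G ∧ Cochordal (H i)) ∧ ∀ u v, G.Adj u v → ∃ i, (H i).Adj u v}

/-- The graph `G*` on the edge set of `G`: two edges are adjacent iff the
subgraph induced by their endpoints is `2K₂` (disjoint, with no cross edges). -/
def starGraph {V : Type} (G : SimpleGraph V) : SimpleGraph G.edgeSet :=
  SimpleGraph.fromRel fun e f =>
    ∀ a ∈ (e.1 : Sym2 V), ∀ b ∈ (f.1 : Sym2 V), a ≠ b ∧ ¬ G.Adj a b

/-- The chromatic number, as a natural number. -/
def chromNum {W : Type} (H : SimpleGraph W) : ℕ :=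
  sInf {n : ℕ | ∃ c : W → Fin n, ∀ u v, H.Adj u v → c u ≠ c v}

/-- The clique number `ω`. -/
def cliqueNum {W : Type} (H : SimpleGraph W) : ℕ :=
  sSup {n : ℕ | ∃ s : Finset W, H.IsNClique n s}

/-- A graph is perfect if every induced subgraph has chromatic number equal to
its clique number. -/
def IsPerfect {W : Type} (H : SimpleGraph W) : Prop :=
  ∀ A : Set W, chromNum (H.induce A) = cliqueNum (H.induce A)

/-! ## Lozin transform, triple subdivision, whiskers -/

/-- Generating relation for the Lozin transform `L_x(G; Y, Z)`: delete `x`,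
add the path `y(=0) - a(=1) - b(=2) - z(=3)` on four new vertices, join `y`
to every vertex of `Y` and `z` to every vertex of `Z`. -/
def lozinRel {V : Type} (G : SimpleGraph V) (x : V) (Y Z : Set V) :
    ({w : V // w ≠ x} ⊕ Fin 4) → ({w : V // w ≠ x} ⊕ Fin 4) → Prop
  | Sum.inl u, Sum.inl w => G.Adj u.1 w.1
  | Sum.inl u, Sum.inr i => (i = 0 ∧ u.1 ∈ Y) ∨ (i = 3 ∧ u.1 ∈ Z)
  | Sum.inr i, Sum.inr j => (i : ℕ) + 1 = (j : ℕ)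
  | _, _ => False

/-- The Lozin transform `L_x(G; Y, Z)` of `G` at the vertex `x`. -/
def lozinModel {V : Type} (G : SimpleGraph V) (x : V) (Y Z : Set V) :
    SimpleGraph ({w : V // w ≠ x} ⊕ Fin 4) :=
  SimpleGraph.fromRel (lozinRel G x Y Z)

/-- `{Y, Z}` is a partition of the open neighborhood of `x`. -/
def IsLozinPartition {V : Type} (G : SimpleGraph V) (x : V) (Y Z : Set V) : Prop :=
  Y ∪ Z = G.neighborSet x ∧ Disjoint Y Z

/-- Generating relation for the triple subdivision of the edge `(u,v)`:
the edge `uv` is removed and replaced by the path `u - y(=0) - a(=1) - b(=2) - v`. -/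
def tripleSubRel {V : Type} (G : SimpleGraph V) (u v : V) :
    (V ⊕ Fin 3) → (V ⊕ Fin 3) → Prop
  | Sum.inl a, Sum.inl b => G.Adj a b ∧ ¬(a = u ∧ b = v) ∧ ¬(a = v ∧ b = u)
  | Sum.inl a, Sum.inr i => (a = u ∧ i = 0) ∨ (a = v ∧ i = 2)
  | Sum.inr i, Sum.inr j => (i : ℕ) + 1 = (j : ℕ)
  | _, _ => False

/-- The triple subdivision `L(G; e)` of `G` at the edge `e = (u,v)`. -/
def tripleSub {V : Type} (G : SimpleGraph V) (u v : V) : SimpleGraph (V ⊕ Fin 3) :=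
  SimpleGraph.fromRel (tripleSubRel G u v)

/-- Generating relation for the whisker `W_S(G)`: attach a new pendant vertex
to each vertex of `S`. -/
def whiskerSRel {V : Type} (G : SimpleGraph V) (S : Finset V) :
    (V ⊕ {s : V // s ∈ S}) → (V ⊕ {s : V // s ∈ S}) → Prop
  | Sum.inl a, Sum.inl b => G.Adj a b
  | Sum.inl a, Sum.inr s => a = s.1
  | _, _ => False

/-- The whisker graph `W_S(G)` on `V ⊕ S`. -/
def whiskerS {V : Type} (G : SimpleGraph V) (S : Finset V) :
    SimpleGraph (V ⊕ {s : V // s ∈ S}) :=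
  SimpleGraph.fromRel (whiskerSRel G S)

/-- Generating relation for the full whisker `W(G)`: attach a pendant vertex
to every vertex. -/
def whiskerRel {V : Type} (G : SimpleGraph V) : (V ⊕ V) → (V ⊕ V) → Prop
  | Sum.inl a, Sum.inl b => G.Adj a b
  | Sum.inl a, Sum.inr b => a = b
  | _, _ => False

/-- The full whisker graph `W(G)` on `V ⊕ V`. -/
def whiskerGraph {V : Type} (G : SimpleGraph V) : SimpleGraph (V ⊕ V) :=
  SimpleGraph.fromRel (whiskerRel G)

/-! ## Vertex decomposability -/

/-- The closed neighborhood of `x` inside the finset `A`. -/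
def closedNbrOn {V : Type} (G : SimpleGraph V) (A : Finset V) (x : V) : Finset V :=
  A.filter fun z => z = x ∨ G.Adj x z

/-- `T` is an independent set of `G`. -/
def IsIndepFinset {V : Type} (G : SimpleGraph V) (T : Finset V) : Prop :=
  ∀ u ∈ T, ∀ v ∈ T, ¬ G.Adj u v

/-- `x` is a shedding vertex of the induced subgraph `G[A]`. -/
def IsSheddingOn {V : Type} (G : SimpleGraph V) (A : Finset V) (x : V) : Prop :=
  ∀ T ⊆ A \ closedNbrOn G A x, IsIndepFinset G T →
    ∃ w ∈ A, G.Adj x w ∧ IsIndepFinset G (insert w T)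

/-- Vertex decomposability of the induced subgraph `G[A]`. -/
def VDOn {V : Type} (G : SimpleGraph V) : Finset V → Prop := fun A =>
  (∀ u ∈ A, ∀ v ∈ A, ¬ G.Adj u v) ∨
    ∃ x : {y : V // y ∈ A}, IsSheddingOn G A x.1 ∧
      VDOn G (A.erase x.1) ∧ VDOn G (A \ closedNbrOn G A x.1)
termination_by A => A.card
decreasing_by
  · exact Finset.card_erase_lt_of_mem x.2
  · refine Finset.card_lt_card ?_
    refine (Finset.ssubset_iff_of_subset Finset.sdiff_subset).2 ⟨x.1, x.2, ?_⟩
    simp [closedNbrOn, x.2]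

end
noncomputable section
namespace EdgeDel
open Finsupp

variable {V : Type} [LinearOrder V] {k : Type} [Field k]

def bd (k : Type) [Field k] {V : Type} [LinearOrder V] :
    (Finset V →₀ k) →ₗ[k] (Finset V →₀ k) :=
  Finsupp.lsum k fun F => LinearMap.toSpanSingleton k _
    (∑ x ∈ F, ((-1 : k) ^ (F.filter (fun z => z < x)).card) • Finsupp.single (F.erase x) (1:k))

def hm (k : Type) [Field k] {V : Type} [LinearOrder V] (a : V) :
    (Finset V →₀ k) →ₗ[k] (Finset V →₀ k) :=
  Finsupp.lsum k fun F => LinearMap.toSpanSingleton k _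
    (if a ∈ F then 0 else ((-1 : k) ^ (F.filter (fun z => z < a)).card) • Finsupp.single (insert a F) (1:k))

def ph (k : Type) [Field k] {V : Type} [LinearOrder V] (a : V) :
    (Finset V →₀ k) →ₗ[k] (Finset V →₀ k) :=
  Finsupp.lsum k fun F => LinearMap.toSpanSingleton k _
    (if a ∈ F then ((-1 : k) ^ ((F.erase a).filter (fun z => z < a)).card) • Finsupp.single (F.erase a) (1:k) else 0)

lemma bd_single (F : Finset V) (r : k) :
    bd k (Finsupp.single F r) =
      r • ∑ x ∈ F, ((-1 : k) ^ (F.filter (fun z => z < x)).card) • Finsupp.single (F.erase x) (1:k) := by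
  simp [bd, Finsupp.lsum_single, LinearMap.toSpanSingleton_apply]

lemma hm_single (a : V) (F : Finset V) (r : k) :
    hm k a (Finsupp.single F r) =
      r • (if a ∈ F then 0 else ((-1 : k) ^ (F.filter (fun z => z < a)).card) • Finsupp.single (insert a F) (1:k)) := by
  simp [hm, Finsupp.lsum_single, LinearMap.toSpanSingleton_apply]

lemma ph_single (a : V) (F : Finset V) (r : k) :
    ph k a (Finsupp.single F r) =
      r • (if a ∈ F then ((-1 : k) ^ ((F.erase a).filter (fun z => z < a)).card) • Finsupp.single (F.erase a) (1:k) else 0) := by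
  simp [ph, Finsupp.lsum_single, LinearMap.toSpanSingleton_apply]

lemma filt_insert (a x : V) (F : Finset V) (ha : a ∉ F) :
    ((insert a F).filter (fun z => z < x)).card
      = (F.filter (fun z => z < x)).card + if a < x then 1 else 0 := by
  rw [Finset.filter_insert]
  by_cases h : a < x
  · rw [if_pos h, if_pos h, Finset.card_insert_of_notMem (by simp [ha])]
  · rw [if_neg h, if_neg h, add_zero]

lemma filt_erase (a x : V) (F : Finset V) (hx : x ∈ F) :
    (F.filter (fun z => z < a)).card
      = ((F.erase x).filter (fun z => z < a)).card + if x < a then 1 else 0 := by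
  conv_lhs => rw [← Finset.insert_erase hx]
  exact filt_insert x a (F.erase x) (Finset.notMem_erase x F)

lemma sign_cancel {n m : ℕ} (h : n = m + 1) : ((-1:k)^n) = -((-1:k)^m) := by
  subst h; rw [pow_succ]; ring


lemma negpow_sq (n : ℕ) : (-1:k)^n * (-1:k)^n = 1 := by
  rw [← pow_add, ← two_mul, pow_mul]; norm_num

/-- key identity: ∂ h_a + h_a ∂ = id -/
lemma I1 (a : V) (c : Finset V →₀ k) : bd k (hm k a c) + hm k a (bd k c) = c := by
  have main : ((bd k).comp (hm k a) + (hm k a).comp (bd k)) = LinearMap.id (R := k) (M := Finset V →₀ k) := by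
    apply Finsupp.lhom_ext
    intro F b
    simp only [LinearMap.add_apply, LinearMap.comp_apply, LinearMap.id_apply]
    by_cases ha : a ∈ F
    · -- case a ∈ F
      rw [hm_single, if_pos ha, smul_zero, map_zero, zero_add, bd_single, map_smul, map_sum]
      rw [Finset.sum_eq_single_of_mem a ha (fun x hx hxa => by
        rw [map_smul, hm_single, if_pos (Finset.mem_erase.2 ⟨Ne.symm hxa, ha⟩), smul_zero, smul_zero])]
      rw [map_smul, hm_single, if_neg (Finset.notMem_erase a F), one_smul,
        Finset.insert_erase ha]
      have ea : (F.filter (fun z => z < a)).card = ((F.erase a).filter (fun z => z < a)).card := by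
        rw [filt_erase a a F ha, if_neg (lt_irrefl a), add_zero]
      rw [ea, smul_smul, smul_smul, Finsupp.smul_single, smul_eq_mul, mul_one]
      congr 1
      have h2 := negpow_sq (k:=k) (((F.erase a).filter (fun z => z < a)).card)
      linear_combination b * h2
    · -- case a ∉ F
      rw [hm_single, if_neg ha, map_smul, map_smul, bd_single, one_smul, Finset.sum_insert ha,
        Finset.erase_insert ha]
      have ea : ((insert a F).filter (fun z => z < a)).card = (F.filter (fun z => z < a)).card := by
        rw [filt_insert a a F ha, if_neg (lt_irrefl a), add_zero]
      rw [ea, bd_single, map_smul, map_sum]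
      simp only [smul_add, Finset.smul_sum, smul_smul, map_smul]
      rw [add_assoc, ← Finset.sum_add_distrib]
      have hz : ∀ x ∈ F,
          (b * ((-1:k) ^ (F.filter (fun z => z < a)).card *
            (-1:k) ^ ((insert a F).filter (fun z => z < x)).card)) •
              Finsupp.single ((insert a F).erase x) (1:k)
          + (b * (-1:k) ^ (F.filter (fun z => z < x)).card) • hm k a (Finsupp.single (F.erase x) (1:k))
          = 0 := by
        intro x hx
        have hxa : x ≠ a := fun h => ha (h ▸ hx)
        have haer : a ∉ F.erase x := fun h => ha (Finset.mem_of_mem_erase h)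
        rw [hm_single, if_neg haer, one_smul, Finset.erase_insert_of_ne (Ne.symm hxa), smul_smul]
        rw [← add_smul]
        convert zero_smul k _ using 2
        have e1 : ((insert a F).filter (fun z => z < x)).card
            = (F.filter (fun z => z < x)).card + if a < x then 1 else 0 := filt_insert a x F ha
        have e2 : (F.filter (fun z => z < a)).card
            = ((F.erase x).filter (fun z => z < a)).card + if x < a then 1 else 0 := filt_erase a x F hx
        have key : (-1:k) ^ (F.filter (fun z => z < a)).card * (-1:k) ^ ((insert a F).filter (fun z => z < x)).card
            = -((-1:k) ^ (F.filter (fun z => z < x)).card * (-1:k) ^ ((F.erase x).filter (fun z => z < a)).card) := by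
          rw [e1, e2, ← pow_add, ← pow_add]
          have e3 : ((F.erase x).filter (fun z => z < a)).card + (if x < a then 1 else 0)
              + ((F.filter (fun z => z < x)).card + if a < x then 1 else 0)
              = ((F.filter (fun z => z < x)).card + ((F.erase x).filter (fun z => z < a)).card) + 1 := by
            have e4 : (if x < a then 1 else 0) + (if a < x then 1 else 0) = 1 := by
              rcases lt_trichotomy x a with h | h | h
              · rw [if_pos h, if_neg (asymm h)]
              · exact absurd h hxa
              · rw [if_neg (asymm h), if_pos h]
            omega
          rw [e3, sign_cancel rfl]
        linear_combination b * key
      rw [Finset.sum_eq_zero hz, add_zero, Finsupp.smul_single, smul_eq_mul, mul_one]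
      congr 1
      have h2 := negpow_sq (k:=k) ((F.filter (fun z => z < a)).card)
      linear_combination b * h2
  exact LinearMap.congr_fun main c


lemma sign_opp {m n : ℕ} (h : (m + n) % 2 = 1) : (-1:k)^m = -((-1:k)^n) := by
  have hodd : Odd (m + n) := Nat.odd_iff.2 h
  have h1 : (-1:k)^(m+n) = -1 := Odd.neg_one_pow hodd
  have h2 := negpow_sq (k:=k) n
  calc (-1:k)^m = (-1:k)^m * ((-1:k)^n * (-1:k)^n) := by rw [h2, mul_one]
    _ = ((-1:k)^(m+n)) * (-1:k)^n := by rw [pow_add]; ring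
    _ = -((-1:k)^n) := by rw [h1]; ring

/-- key identity: ∂ φ_a + φ_a ∂ = 0 -/
lemma I5 (a : V) (c : Finset V →₀ k) : bd k (ph k a c) + ph k a (bd k c) = 0 := by
  have main : ((bd k).comp (ph k a) + (ph k a).comp (bd k)) = (0 : (Finset V →₀ k) →ₗ[k] (Finset V →₀ k)) := by
    apply Finsupp.lhom_ext
    intro F b
    simp only [LinearMap.add_apply, LinearMap.comp_apply, LinearMap.zero_apply]
    by_cases ha : a ∈ F
    · rw [ph_single, if_pos ha, map_smul, map_smul, bd_single, one_smul, bd_single, map_smul, map_sum]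
      simp only [map_smul]
      have hsplit : ∑ x ∈ F, ((-1:k) ^ (F.filter (fun z => z < x)).card) •
          ph k a (Finsupp.single (F.erase x) (1:k))
          = ∑ x ∈ F.erase a, ((-1:k) ^ (F.filter (fun z => z < x)).card) •
              ph k a (Finsupp.single (F.erase x) (1:k)) := by
        rw [← Finset.add_sum_erase F _ ha, ph_single, if_neg (Finset.notMem_erase a F),
          smul_zero, smul_zero, zero_add]
      rw [hsplit]
      simp only [Finset.smul_sum, smul_smul]
      rw [← Finset.sum_add_distrib]
      apply Finset.sum_eq_zero
      intro x hx
      have hxa : x ≠ a := Finset.ne_of_mem_erase hx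
      have hxF : x ∈ F := Finset.mem_of_mem_erase hx
      have haex : a ∈ F.erase x := Finset.mem_erase.2 ⟨Ne.symm hxa, ha⟩
      rw [ph_single, if_pos haex, one_smul, smul_smul]
      have ecomm : (F.erase x).erase a = (F.erase a).erase x := by
        ext y; simp only [Finset.mem_erase]; tauto
      rw [ecomm, ← add_smul]
      convert zero_smul k _ using 2
      have e1 : (F.filter (fun z => z < x)).card
          = ((F.erase a).filter (fun z => z < x)).card + if a < x then 1 else 0 :=
        filt_erase x a F ha
      have e2 : ((F.erase a).filter (fun z => z < a)).card
          = (((F.erase a).erase x).filter (fun z => z < a)).card + if x < a then 1 else 0 :=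
        filt_erase a x (F.erase a) hx
      have e4 : (if x < a then 1 else 0) + (if a < x then 1 else 0) = 1 := by
        rcases lt_trichotomy x a with h | h | h
        · rw [if_pos h, if_neg (asymm h)]
        · exact absurd h hxa
        · rw [if_neg (asymm h), if_pos h]
      have key : (-1:k) ^ ((F.erase a).filter (fun z => z < a)).card *
            (-1:k) ^ ((F.erase a).filter (fun z => z < x)).card
          = -((-1:k) ^ (F.filter (fun z => z < x)).card *
              (-1:k) ^ (((F.erase a).erase x).filter (fun z => z < a)).card) := by
        rw [← pow_add, ← pow_add]
        apply sign_opp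
        rw [e1, e2]
        omega
      linear_combination b * key
    · rw [ph_single, if_neg ha, smul_zero, map_zero, zero_add, bd_single, map_smul, map_sum]
      rw [Finset.sum_eq_zero, smul_zero]
      intro x hx
      have : a ∉ F.erase x := fun h => ha (Finset.mem_of_mem_erase h)
      rw [map_smul, ph_single, if_neg this, smul_zero, smul_zero]
  exact LinearMap.congr_fun main c

/-- projection onto faces containing a -/
lemma proj_ha (a : V) (c : Finset V →₀ k) :
    hm k a (ph k a c) = Finsupp.filter (fun F => a ∈ F) c := by
  induction c using Finsupp.induction_linear with
  | zero => rw [map_zero, map_zero, Finsupp.filter_zero]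
  | add f g hf hg => rw [map_add, map_add, hf, hg, Finsupp.filter_add]
  | single F b =>
    by_cases ha : a ∈ F
    · rw [ph_single, if_pos ha, map_smul, map_smul, hm_single,
        if_neg (Finset.notMem_erase a F), one_smul, Finset.insert_erase ha,
        Finsupp.filter_single_of_pos (fun G => a ∈ G) ha, smul_smul, smul_smul,
        Finsupp.smul_single, smul_eq_mul, mul_one]
      congr 1
      have h2 := negpow_sq (k:=k) (((F.erase a).filter (fun z => z < a)).card)
      linear_combination b * h2
    · rw [ph_single, if_neg ha, smul_zero, map_zero, Finsupp.filter_single_of_neg (fun G => a ∈ G) ha]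

lemma filter_compl_support (p : Finset V → Prop) [DecidablePred p] (c : Finset V →₀ k) :
    ∀ F ∈ (c - Finsupp.filter p c).support, ¬ p F := by
  intro F hF hp
  rw [Finsupp.mem_support_iff] at hF
  apply hF
  rw [Finsupp.sub_apply, Finsupp.filter_apply, if_pos hp, sub_self]

lemma hm_apply_sum (a : V) (c : Finset V →₀ k) :
    hm k a c = c.sum fun F b => b • (if a ∈ F then 0 else
      ((-1 : k) ^ (F.filter (fun z => z < a)).card) • Finsupp.single (insert a F) (1:k)) := by
  rw [hm, Finsupp.lsum_apply]
  rfl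

lemma ph_apply_sum (a : V) (c : Finset V →₀ k) :
    ph k a c = c.sum fun F b => b • (if a ∈ F then
      ((-1 : k) ^ ((F.erase a).filter (fun z => z < a)).card) • Finsupp.single (F.erase a) (1:k) else 0) := by
  rw [ph, Finsupp.lsum_apply]
  rfl

lemma bd_apply_sum (c : Finset V →₀ k) :
    bd k c = c.sum fun F b => b • ∑ x ∈ F,
      ((-1 : k) ^ (F.filter (fun z => z < x)).card) • Finsupp.single (F.erase x) (1:k) := by
  rw [bd, Finsupp.lsum_apply]
  rfl

lemma hm_supp (a : V) (c : Finset V →₀ k) :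
    ∀ G ∈ (hm k a c).support, ∃ F ∈ c.support, a ∉ F ∧ G = insert a F := by
  intro G hG
  rw [hm_apply_sum] at hG
  obtain ⟨F, hF, hG2⟩ := Finset.mem_biUnion.1 (Finsupp.support_sum hG)
  refine ⟨F, hF, ?_⟩
  by_cases ha : a ∈ F
  · rw [if_pos ha, smul_zero] at hG2; simp at hG2
  · rw [if_neg ha, smul_smul] at hG2
    have h3 := Finsupp.support_single_subset (Finsupp.support_smul hG2)
    simp only [Finset.mem_singleton] at h3
    exact ⟨ha, h3⟩

lemma ph_supp (a : V) (c : Finset V →₀ k) :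
    ∀ G ∈ (ph k a c).support, ∃ F ∈ c.support, a ∈ F ∧ G = F.erase a := by
  intro G hG
  rw [ph_apply_sum] at hG
  obtain ⟨F, hF, hG2⟩ := Finset.mem_biUnion.1 (Finsupp.support_sum hG)
  refine ⟨F, hF, ?_⟩
  by_cases ha : a ∈ F
  · rw [if_pos ha, smul_smul] at hG2
    have h3 := Finsupp.support_single_subset (Finsupp.support_smul hG2)
    simp only [Finset.mem_singleton] at h3
    exact ⟨ha, h3⟩
  · rw [if_neg ha, smul_zero] at hG2; simp at hG2

lemma bd_supp (c : Finset V →₀ k) :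
    ∀ G ∈ (bd k c).support, ∃ F ∈ c.support, ∃ x ∈ F, G = F.erase x := by
  intro G hG
  rw [bd_apply_sum] at hG
  obtain ⟨F, hF, hG2⟩ := Finset.mem_biUnion.1 (Finsupp.support_sum hG)
  refine ⟨F, hF, ?_⟩
  rw [Finset.smul_sum] at hG2
  obtain ⟨x, hx, hG3⟩ := Finset.mem_biUnion.1 (Finsupp.support_finset_sum hG2)
  rw [smul_smul] at hG3
  have h3 := Finsupp.support_single_subset (Finsupp.support_smul hG3)
  simp only [Finset.mem_singleton] at h3
  exact ⟨x, hx, h3⟩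

lemma E1 (a : V) (c : Finset V →₀ k) (h : ∀ F ∈ c.support, a ∉ F) : ph k a c = 0 := by
  rw [ph_apply_sum]
  apply Finset.sum_eq_zero
  intro F hF
  dsimp only
  rw [if_neg (h F hF), smul_zero]

lemma bd_card0 (c : Finset V →₀ k) (h : ∀ F ∈ c.support, F.card = 0) : bd k c = 0 := by
  have hsub : c.support ⊆ {∅} := by
    intro F hF
    rw [Finset.mem_singleton, ← Finset.card_eq_zero.1 (h F hF)]
  rw [Finsupp.support_subset_singleton.1 hsub, bd_single]
  simp

lemma bd_bd_hm (a : V) (c : Finset V →₀ k) :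
    bd k (bd k (hm k a c)) = hm k a (bd k (bd k c)) := by
  have h1 : bd k (hm k a c) = c - hm k a (bd k c) := eq_sub_of_add_eq (I1 a c)
  have h2 : bd k (hm k a (bd k c)) = bd k c - hm k a (bd k (bd k c)) :=
    eq_sub_of_add_eq (I1 a (bd k c))
  rw [h1, map_sub, h2, sub_sub_cancel]

lemma bd_bd_single : ∀ (n : ℕ), ∀ (F : Finset V), F.card = n → ∀ b : k,
    bd k (bd k (Finsupp.single F b)) = 0 := by
  intro n
  induction n using Nat.strong_induction_on with
  | _ n IH =>
    intro F hF b
    rcases Finset.eq_empty_or_nonempty F with rfl | ⟨a, ha⟩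
    · rw [bd_single]; simp
    · have hsingle : Finsupp.single F b
          = hm k a (Finsupp.single (F.erase a)
              (((-1:k)^((F.erase a).filter (fun z => z < a)).card) * b)) := by
        rw [hm_single, if_neg (Finset.notMem_erase a F), smul_smul, Finset.insert_erase ha,
          Finsupp.smul_single, smul_eq_mul, mul_one]
        congr 1
        have h2 := negpow_sq (k:=k) (((F.erase a).filter (fun z => z < a)).card)
        linear_combination (-b) * h2
      rw [hsingle, bd_bd_hm]
      rw [IH (F.erase a).card (by rw [← hF]; exact Finset.card_erase_lt_of_mem ha)
        (F.erase a) rfl, map_zero]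

lemma bd_bd (c : Finset V →₀ k) : bd k (bd k c) = 0 := by
  induction c using Finsupp.induction_linear with
  | zero => simp
  | add f g hf hg => rw [map_add, map_add, hf, hg, add_zero]
  | single F b => exact bd_bd_single F.card F rfl b

/-- chains of a complex in a given cardinality -/
def Ch (Δ : Finset V → Prop) (n : ℕ) (c : Finset V →₀ k) : Prop :=
  ∀ F ∈ c.support, Δ F ∧ F.card = n

/-- chain-level nontriviality of reduced homology -/
def NT (k : Type) [Field k] {V : Type} [LinearOrder V] (Δ : Finset V → Prop) (j : ℕ) : Prop :=
  ∃ z : Finset V →₀ k, Ch Δ j z ∧ (j ≠ 0 → bd k z = 0) ∧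
    ∀ C : Finset V →₀ k, Ch Δ (j+1) C → bd k C ≠ z

lemma Ch_zero (Δ : Finset V → Prop) (n : ℕ) : Ch (k := k) Δ n 0 := by
  intro F hF; simp at hF

lemma bd_card_zero (c : Finset V →₀ k) (h : ∀ F ∈ c.support, F.card = 0) : bd k c = 0 :=
  bd_card0 c h


section Bridge

variable (Δ : Finset V → Prop)

/-- inclusion of Δ-chains into the big module -/
def iot (Δ : Finset V → Prop) (n : ℕ) : (Faces Δ n →₀ k) →ₗ[k] (Finset V →₀ k) :=
  Finsupp.lmapDomain k k (fun F : Faces Δ n => F.1)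

lemma iot_inj (n : ℕ) : Function.Injective (iot (k := k) Δ n) := by
  apply Finsupp.mapDomain_injective
  intro x y h
  exact Subtype.ext h

lemma iot_comm (hdc : ∀ ⦃F G : Finset V⦄, Δ F → G ⊆ F → Δ G) (n : ℕ)
    (c : Faces Δ (n+1) →₀ k) :
    iot Δ n (cxBoundary k Δ n c) = bd k (iot Δ (n+1) c) := by
  induction c using Finsupp.induction_linear with
  | zero => rw [map_zero, map_zero, map_zero, map_zero]
  | add f g hf hg => rw [map_add, map_add, map_add, map_add, hf, hg]
  | single Fs b =>
    have hone : cxBoundary k Δ n (Finsupp.single Fs b)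
        = b • ∑ x ∈ Fs.1.attach,
          ((-1 : k) ^ (Fs.1.filter (fun z => z < x.1)).card) •
            (if h : Δ (Fs.1.erase x.1) ∧ (Fs.1.erase x.1).card = n then
              Finsupp.single (⟨Fs.1.erase x.1, h⟩ : Faces Δ n) (1 : k) else 0) := by
      simp [cxBoundary, Finsupp.lsum_single, LinearMap.toSpanSingleton_apply]
      rfl
    have hio : iot Δ (n+1) (Finsupp.single Fs b) = Finsupp.single Fs.1 b := by
      rw [iot, Finsupp.lmapDomain_apply, Finsupp.mapDomain_single]
    erw [hone, hio, bd_single, map_smul, map_sum]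
    congr 1
    rw [← Finset.sum_attach Fs.1 (fun x => ((-1 : k) ^ (Fs.1.filter (fun z => z < x)).card) •
      Finsupp.single (Fs.1.erase x) (1:k))]
    apply Finset.sum_congr rfl
    intro x _
    have hcond : Δ (Fs.1.erase x.1) ∧ (Fs.1.erase x.1).card = n := by
      refine ⟨hdc Fs.2.1 (Finset.erase_subset _ _), ?_⟩
      rw [Finset.card_erase_of_mem x.2, Fs.2.2]
      omega
    erw [dif_pos hcond, map_smul, iot, Finsupp.lmapDomain_apply, Finsupp.mapDomain_single]

lemma iot_Ch (n : ℕ) (c : Faces Δ n →₀ k) : Ch Δ n (iot Δ n c) := by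
  intro G hG
  rw [iot, Finsupp.lmapDomain_apply] at hG
  have := Finsupp.mapDomain_support hG
  rw [Finset.mem_image] at this
  obtain ⟨y, _, rfl⟩ := this
  exact y.2

lemma iot_sub (n : ℕ) (z : Finset V →₀ k) (hz : Ch Δ n z) :
    iot Δ n (Finsupp.subtypeDomain (fun F => Δ F ∧ F.card = n) z) = z := by
  erw [iot, Finsupp.lmapDomain_apply,
    show (fun F : Faces Δ n => F.1)
      = ⇑(⟨fun F : Faces Δ n => F.1, fun x y h => Subtype.ext h⟩ : Faces Δ n ↪ Finset V) from rfl,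
    ← Finsupp.embDomain_eq_mapDomain]
  ext F
  by_cases hp : Δ F ∧ F.card = n
  · have h1 : F = (⟨fun F : Faces Δ n => F.1, fun x y h => Subtype.ext h⟩ :
        Faces Δ n ↪ Finset V) ⟨F, hp⟩ := rfl
    conv_lhs => rw [h1]
    refine (Finsupp.embDomain_apply_self ..).trans ?_
    rfl
  · erw [Finsupp.embDomain_notin_range]
    · symm
      by_contra h
      exact hp (hz F (Finsupp.mem_support_iff.2 h))
    · intro hr
      obtain ⟨y, hy⟩ := hr
      exact hp (hy ▸ y.2)

lemma NT_iff_HNontrivial (hdc : ∀ ⦃F G : Finset V⦄, Δ F → G ⊆ F → Δ G) (j : ℕ) :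
    NT k Δ j ↔ HNontrivial k Δ j := by
  constructor
  · rintro ⟨z, hCh, hcyc, hnb⟩
    rw [HNontrivial, SetLike.not_le_iff_exists]
    refine ⟨Finsupp.subtypeDomain (fun F => Δ F ∧ F.card = j) z, ?_, ?_⟩
    · cases j with
      | zero => exact Submodule.mem_top
      | succ m =>
        show _ ∈ LinearMap.ker (cxBoundary k Δ m)
        erw [LinearMap.mem_ker]
        apply iot_inj Δ m
        erw [iot_comm Δ hdc m, iot_sub Δ (m+1) z hCh, hcyc (Nat.succ_ne_zero m), map_zero]
    · rintro ⟨C', hC'⟩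
      apply hnb (iot Δ (j+1) C') (iot_Ch Δ (j+1) C')
      erw [← iot_comm Δ hdc j C', hC', iot_sub Δ j z hCh]
  · intro h
    rw [HNontrivial, SetLike.not_le_iff_exists] at h
    obtain ⟨x, hxc, hxr⟩ := h
    refine ⟨iot Δ j x, iot_Ch Δ j x, ?_, ?_⟩
    · intro hj
      cases j with
      | zero => exact absurd rfl hj
      | succ m =>
        rw [← iot_comm Δ hdc m x]
        have : cxBoundary k Δ m x = 0 := by
          have := hxc
          simp only [cxCycles] at this
          exact LinearMap.mem_ker.1 this
        rw [this, map_zero]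
    · intro C hC hbd
      apply hxr
      refine ⟨Finsupp.subtypeDomain (fun F => Δ F ∧ F.card = j+1) C, ?_⟩
      apply iot_inj Δ j
      erw [iot_comm Δ hdc j, iot_sub Δ (j+1) C hC, hbd]

end Bridge

/-- φ_a ∘ h_a = filter (a ∉ ·) -/
lemma proj_ph (a : V) (c : Finset V →₀ k) :
    ph k a (hm k a c) = Finsupp.filter (fun F => a ∉ F) c := by
  induction c using Finsupp.induction_linear with
  | zero => rw [map_zero, map_zero, Finsupp.filter_zero]
  | add f g hf hg => rw [map_add, map_add, hf, hg, Finsupp.filter_add]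
  | single F b =>
    by_cases ha : a ∈ F
    · rw [hm_single, if_pos ha, smul_zero, map_zero,
        Finsupp.filter_single_of_neg (fun G => a ∉ G) (by simpa using ha)]
    · rw [hm_single, if_neg ha, map_smul, map_smul, ph_single,
        if_pos (Finset.mem_insert_self a F), Finset.erase_insert ha,
        Finsupp.filter_single_of_pos (fun G => a ∉ G) ha]
      simp only [one_smul, smul_smul, Finsupp.smul_single, smul_eq_mul, mul_one]
      congr 1
      have h2 := negpow_sq (k:=k) ((F.filter (fun z => z < a)).card)
      linear_combination b * h2

lemma filter_eq_self_of (p : Finset V → Prop) [DecidablePred p] (c : Finset V →₀ k)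
    (h : ∀ F ∈ c.support, p F) : Finsupp.filter p c = c := by
  ext F
  rw [Finsupp.filter_apply]
  by_cases hp : p F
  · rw [if_pos hp]
  · rw [if_neg hp]
    symm
    by_contra hc
    exact hp (h F (Finsupp.mem_support_iff.2 hc))

lemma E1_hm (a b' : V) (hab : a ≠ b') (c : Finset V →₀ k)
    (h : ∀ F ∈ c.support, a ∉ F) : ph k a (hm k b' c) = 0 := by
  apply E1
  intro F hF
  obtain ⟨G, hG, hbG, rfl⟩ := hm_supp b' c F hF
  simp only [Finset.mem_insert]
  push_neg
  exact ⟨hab, h G hG⟩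

/-- a complex with a vertex has trivial H̃_{-1} -/
lemma NT_zero_of_vertex (Δ : Finset V → Prop) (u : V) (hu : Δ {u}) : ¬ NT k Δ 0 := by
  rintro ⟨z, hCh, -, hnb⟩
  apply hnb (hm k u z)
  · intro F hF
    obtain ⟨G, hG, huG, rfl⟩ := hm_supp u z F hF
    have h0 : G = ∅ := Finset.card_eq_zero.1 (hCh G hG).2
    subst h0
    exact ⟨hu, by simp⟩
  · have hz0 : bd k z = 0 := bd_card_zero z (fun F hF => (hCh F hF).2)
    rw [eq_sub_of_add_eq (I1 u z), hz0, map_zero, sub_zero]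

/-- suspension: adding two "apex" vertices joined by an edge raises nontrivial degree by 1 -/
lemma NT_susp (K Λ : Finset V → Prop) (a b : V) (hab : a ≠ b)
    (hKa : ∀ F, K F → a ∉ F ∧ b ∉ F)
    (hΛab : ∀ F, K F → Λ (insert a F) ∧ Λ (insert b F))
    (hΛa : ∀ F, Λ F → a ∈ F → K (F.erase a))
    (j : ℕ) : NT k K j → NT k Λ (j+1) := by
  rintro ⟨z, hCh, hcyc, hnb⟩
  have hz0 : bd k z = 0 := by
    rcases Nat.eq_zero_or_pos j with h0 | hpos
    · exact bd_card_zero z (fun F hF => h0 ▸ (hCh F hF).2)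
    · exact hcyc (Nat.pos_iff_ne_zero.1 hpos)
  refine ⟨hm k a z - hm k b z, ?_, ?_, ?_⟩
  · intro F hF
    rcases Finset.mem_union.1 (Finsupp.support_sub hF) with h | h
    · obtain ⟨G, hG, haG, rfl⟩ := hm_supp a z F h
      exact ⟨(hΛab G (hCh G hG).1).1, by rw [Finset.card_insert_of_notMem haG, (hCh G hG).2]⟩
    · obtain ⟨G, hG, hbG, rfl⟩ := hm_supp b z F h
      exact ⟨(hΛab G (hCh G hG).1).2, by rw [Finset.card_insert_of_notMem hbG, (hCh G hG).2]⟩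
  · intro _
    rw [map_sub, eq_sub_of_add_eq (I1 a z), eq_sub_of_add_eq (I1 b z), hz0, map_zero, map_zero,
      sub_zero, sub_self]
  · intro C hC hbd
    have h1 : bd k (ph k a C) = - ph k a (bd k C) :=
      eq_neg_of_add_eq_zero_left (I5 a C)
    have hza : ∀ F ∈ z.support, a ∉ F := fun F hF => (hKa F (hCh F hF).1).1
    have h2 : ph k a (bd k C) = z := by
      rw [hbd, map_sub, proj_ph, E1_hm a b hab z hza, sub_zero]
      exact filter_eq_self_of _ z hza
    apply hnb (- ph k a C)
    · intro F hF
      rw [Finsupp.support_neg] at hF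
      obtain ⟨G, hG, haG, rfl⟩ := ph_supp a C F hF
      have hL := hC G hG
      refine ⟨hΛa G hL.1 haG, ?_⟩
      rw [Finset.card_erase_of_mem haG, hL.2]
      omega
    · rw [map_neg, h1, h2, neg_neg]

/-- MV at a vertex: from the deletion to the whole complex or the link, same degree -/
lemma NT_mv_del (full del lk : Finset V → Prop) (a : V)
    (hdel : ∀ F, del F ↔ full F ∧ a ∉ F)
    (hlk : ∀ G, lk G ↔ a ∉ G ∧ full (insert a G))
    (hdc : ∀ ⦃F G : Finset V⦄, full F → G ⊆ F → full G)
    (j : ℕ) : NT k del j → NT k full j ∨ NT k lk j := by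
  rintro ⟨z, hCh, hcyc, hnb⟩
  have hz0 : bd k z = 0 := by
    rcases Nat.eq_zero_or_pos j with h0 | hpos
    · exact bd_card_zero z (fun F hF => h0 ▸ (hCh F hF).2)
    · exact hcyc (Nat.pos_iff_ne_zero.1 hpos)
  by_cases hfull : NT k full j
  · exact Or.inl hfull
  right
  have hzfull : Ch full j z := fun F hF => ⟨((hdel F).1 (hCh F hF).1).1, (hCh F hF).2⟩
  have hex : ∃ C, Ch full (j+1) C ∧ bd k C = z := by
    by_contra hno
    push_neg at hno
    exact hfull ⟨z, hzfull, fun _ => hz0, fun C hC => hno C hC⟩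
  obtain ⟨C, hCfull, hbdC⟩ := hex
  have hza : ∀ F ∈ z.support, a ∉ F := fun F hF => ((hdel F).1 (hCh F hF).1).2
  have hCa_supp : ∀ F ∈ (ph k a C).support, lk F ∧ F.card = j := by
    intro F hF
    obtain ⟨G, hG, haG, rfl⟩ := ph_supp a C F hF
    constructor
    · rw [hlk]
      refine ⟨Finset.notMem_erase a G, ?_⟩
      rw [Finset.insert_erase haG]
      exact (hCfull G hG).1
    · rw [Finset.card_erase_of_mem haG, (hCfull G hG).2]
      omega
  have hCa_cyc : bd k (ph k a C) = 0 := by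
    rw [eq_neg_of_add_eq_zero_left (I5 a C), hbdC, E1 a z hza, neg_zero]
  by_cases hlkNT : NT k lk j
  · exact hlkNT
  exfalso
  have hexD : ∃ D, Ch lk (j+1) D ∧ bd k D = ph k a C := by
    by_contra hno
    push_neg at hno
    exact hlkNT ⟨ph k a C, hCa_supp, fun _ => hCa_cyc, fun D hD => hno D hD⟩
  obtain ⟨D, hDlk, hbdD⟩ := hexD
  -- the pure part of C
  have hkey : bd k ((C - hm k a (ph k a C)) + D) = z := by
    rw [map_add, map_sub, hbdC, hbdD, eq_sub_of_add_eq (I1 a (ph k a C)), hCa_cyc, map_zero,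
      sub_zero]
    abel
  apply hnb ((C - hm k a (ph k a C)) + D) _ hkey
  intro F hF
  rcases Finset.mem_union.1 (Finsupp.support_add hF) with h | h
  · rw [proj_ha] at h
    have h1 : F ∈ C.support := by
      rcases Finset.mem_union.1 (Finsupp.support_sub h) with h' | h'
      · exact h'
      · rw [Finsupp.support_filter] at h'
        exact (Finset.mem_filter.1 h').1
    have h2 : a ∉ F := filter_compl_support (fun F => a ∈ F) C F h
    exact ⟨(hdel F).2 ⟨(hCfull F h1).1, h2⟩, (hCfull F h1).2⟩
  · have h1 := hDlk F h
    refine ⟨(hdel F).2 ⟨?_, ((hlk F).1 h1.1).1⟩, h1.2⟩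
    exact hdc ((hlk F).1 h1.1).2 (Finset.subset_insert a F)

/-- MV at a vertex: from the whole complex to the deletion or the link (degree drop) -/
lemma NT_mv_full (full del lk : Finset V → Prop) (a : V)
    (hdel : ∀ F, del F ↔ full F ∧ a ∉ F)
    (hlk : ∀ G, lk G ↔ a ∉ G ∧ full (insert a G))
    (hdc : ∀ ⦃F G : Finset V⦄, full F → G ⊆ F → full G)
    (m : ℕ) : NT k full (m+1) → NT k del (m+1) ∨ NT k lk m := by
  rintro ⟨z, hCh, hcyc, hnb⟩
  have hz0 : bd k z = 0 := hcyc (Nat.succ_ne_zero m)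
  have hza_supp : ∀ F ∈ (ph k a z).support, lk F ∧ F.card = m := by
    intro F hF
    obtain ⟨G, hG, haG, rfl⟩ := ph_supp a z F hF
    constructor
    · rw [hlk]
      refine ⟨Finset.notMem_erase a G, ?_⟩
      rw [Finset.insert_erase haG]
      exact (hCh G hG).1
    · rw [Finset.card_erase_of_mem haG, (hCh G hG).2]
      omega
  have hza_cyc : bd k (ph k a z) = 0 := by
    rw [eq_neg_of_add_eq_zero_left (I5 a z), hz0, map_zero, neg_zero]
  by_cases h : ∀ D, Ch lk (m+1) D → bd k D ≠ ph k a z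
  · exact Or.inr ⟨ph k a z, hza_supp, fun _ => hza_cyc, h⟩
  left
  push_neg at h
  obtain ⟨D, hD, hbdD⟩ := h
  have hDdel : ∀ F ∈ D.support, del F ∧ F.card = m + 1 := by
    intro F hF
    have h1 := hD F hF
    exact ⟨(hdel F).2 ⟨hdc ((hlk F).1 h1.1).2 (Finset.subset_insert a F), ((hlk F).1 h1.1).1⟩,
      h1.2⟩
  refine ⟨(z - hm k a (ph k a z)) + D, ?_, ?_, ?_⟩
  · intro F hF
    rcases Finset.mem_union.1 (Finsupp.support_add hF) with h' | h'
    · rw [proj_ha] at h'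
      have h1 : F ∈ z.support := by
        rcases Finset.mem_union.1 (Finsupp.support_sub h') with h'' | h''
        · exact h''
        · rw [Finsupp.support_filter] at h''
          exact (Finset.mem_filter.1 h'').1
      have h2 : a ∉ F := filter_compl_support (fun F => a ∈ F) z F h'
      exact ⟨(hdel F).2 ⟨(hCh F h1).1, h2⟩, (hCh F h1).2⟩
    · exact hDdel F h'
  · intro _
    rw [map_add, map_sub, hz0, eq_sub_of_add_eq (I1 a (ph k a z)), hza_cyc, map_zero, sub_zero,
      hbdD]
    abel
  · intro E hE hbdE
    apply hnb (E - hm k a D)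
    · intro F hF
      rcases Finset.mem_union.1 (Finsupp.support_sub hF) with h' | h'
      · exact ⟨((hdel F).1 (hE F h').1).1, (hE F h').2⟩
      · obtain ⟨G, hG, haG, rfl⟩ := hm_supp a D F h'
        exact ⟨((hlk G).1 (hD G hG).1).2, by rw [Finset.card_insert_of_notMem haG, (hD G hG).2]⟩
    · rw [map_sub, hbdE, eq_sub_of_add_eq (I1 a D), hbdD]
      abel

/-- double projection onto faces containing u and v -/
lemma proj2 (u v : V) (huv : u ≠ v) (c : Finset V →₀ k) :
    hm k v (hm k u (ph k u (ph k v c))) = Finsupp.filter (fun F => u ∈ F ∧ v ∈ F) c := by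
  induction c using Finsupp.induction_linear with
  | zero => rw [map_zero, map_zero, map_zero, map_zero, Finsupp.filter_zero]
  | add f g hf hg => rw [map_add, map_add, map_add, map_add, hf, hg, Finsupp.filter_add]
  | single F b =>
    by_cases hv : v ∈ F
    · by_cases hu : u ∈ F
      · have huv' : u ∈ F.erase v := Finset.mem_erase.2 ⟨huv, hu⟩
        rw [ph_single, if_pos hv]
        simp only [map_smul]
        rw [ph_single, if_pos huv']
        simp only [map_smul]
        rw [hm_single, if_neg (Finset.notMem_erase u (F.erase v))]
        simp only [map_smul, one_smul, smul_smul]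
        rw [Finset.insert_erase huv', hm_single, if_neg (Finset.notMem_erase v F),
          Finset.insert_erase hv,
          Finsupp.filter_single_of_pos (fun G => u ∈ G ∧ v ∈ G) ⟨hu, hv⟩]
        simp only [one_smul, smul_smul, Finsupp.smul_single, smul_eq_mul, mul_one]
        congr 1
        have h1 := negpow_sq (k:=k) (((F.erase v).filter (fun z => z < v)).card)
        have h2 := negpow_sq (k:=k) ((((F.erase v).erase u).filter (fun z => z < u)).card)
        linear_combination (b * ((-1:k) ^ (((F.erase v).erase u).filter (fun z => z < u)).card
          * (-1:k) ^ (((F.erase v).erase u).filter (fun z => z < u)).card)) * h1 + b * h2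
      · have huv' : u ∉ F.erase v := fun h => hu (Finset.mem_of_mem_erase h)
        rw [ph_single, if_pos hv]
        simp only [map_smul]
        rw [ph_single, if_neg huv',
          Finsupp.filter_single_of_neg (fun G => u ∈ G ∧ v ∈ G) (fun h => hu h.1)]
        simp
    · rw [ph_single, if_neg hv,
        Finsupp.filter_single_of_neg (fun G => u ∈ G ∧ v ∈ G) (fun h => hv h.2)]
      simp

/-- reduction modulo the star of the edge uv -/
lemma mv2_reduce (Δ Δ' K : Finset V → Prop) (u v w : V) (huv : u ≠ v)
    (hΔ : ∀ F, Δ F ↔ Δ' F ∧ ¬(u ∈ F ∧ v ∈ F))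
    (hK : ∀ G, K G ↔ u ∉ G ∧ v ∉ G ∧ Δ' (insert u (insert v G)))
    (hdc : ∀ ⦃F G : Finset V⦄, Δ' F → G ⊆ F → Δ' G)
    (hw : ∀ G, K G → K (insert w G))
    (n : ℕ) (X : Finset V →₀ k) (hX : Ch Δ' n X)
    (hX2 : bd k (ph k u (ph k v X)) = 0) :
    ∃ Y P, X = Y + bd k P ∧ Ch Δ n Y ∧ Ch Δ' (n+1) P := by
  have hX2supp : ∀ G ∈ (ph k u (ph k v X)).support, K G ∧ G.card + 2 = n := by
    intro G hG
    obtain ⟨G1, hG1, huG1, rfl⟩ := ph_supp u _ G hG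
    obtain ⟨F, hF, hvF, rfl⟩ := ph_supp v X G1 hG1
    have hXF := hX F hF
    have huF : u ∈ F := Finset.mem_of_mem_erase huG1
    have hrebuild : insert u (insert v ((F.erase v).erase u)) = F := by
      ext y
      simp only [Finset.mem_insert, Finset.mem_erase]
      constructor
      · rintro (rfl | rfl | ⟨-, -, h⟩)
        · exact huF
        · exact hvF
        · exact h
      · intro hy
        by_cases h1 : y = u
        · exact Or.inl h1
        by_cases h2 : y = v
        · exact Or.inr (Or.inl h2)
        · exact Or.inr (Or.inr ⟨h1, h2, hy⟩)
    constructor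
    · rw [hK]
      refine ⟨Finset.notMem_erase u _, ?_, ?_⟩
      · intro hv'
        exact Finset.notMem_erase v F (Finset.mem_of_mem_erase hv')
      · rw [hrebuild]; exact hXF.1
    · have c1 : (F.erase v).card = F.card - 1 := Finset.card_erase_of_mem hvF
      have c2 : ((F.erase v).erase u).card = (F.erase v).card - 1 :=
        Finset.card_erase_of_mem huG1
      have c4 : 0 < F.card := Finset.card_pos.2 ⟨v, hvF⟩
      have c5 : 0 < (F.erase v).card := Finset.card_pos.2 ⟨u, huG1⟩
      have c3 := hXF.2
      omega
  have hDsupp : ∀ G ∈ (hm k w (ph k u (ph k v X))).support, K G ∧ G.card + 1 = n := by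
    intro G hG
    obtain ⟨G1, hG1, hwG1, rfl⟩ := hm_supp w _ G hG
    refine ⟨hw G1 (hX2supp G1 hG1).1, ?_⟩
    rw [Finset.card_insert_of_notMem hwG1]
    have := (hX2supp G1 hG1).2
    omega
  have hbdD : bd k (hm k w (ph k u (ph k v X))) = ph k u (ph k v X) := by
    rw [eq_sub_of_add_eq (I1 w (ph k u (ph k v X))), hX2, map_zero, sub_zero]
  set D := hm k w (ph k u (ph k v X)) with hDdef
  have hbdP : bd k (hm k v (hm k u D)) = hm k u D - hm k v D
      + Finsupp.filter (fun F => u ∈ F ∧ v ∈ F) X := by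
    rw [eq_sub_of_add_eq (I1 v (hm k u D)), eq_sub_of_add_eq (I1 u D), hbdD, map_sub,
      proj2 u v huv X]
    abel
  refine ⟨(X - Finsupp.filter (fun F => u ∈ F ∧ v ∈ F) X) - hm k u D + hm k v D,
    hm k v (hm k u D), ?_, ?_, ?_⟩
  · rw [hbdP]; abel
  · intro F hF
    have hsub : F ∈ ((X - Finsupp.filter (fun F => u ∈ F ∧ v ∈ F) X) - hm k u D).support
        ∪ (hm k v D).support := Finsupp.support_add hF
    rcases Finset.mem_union.1 hsub with h1 | h1
    · rcases Finset.mem_union.1 (Finsupp.support_sub h1) with h2 | h2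
      · -- pure part
        have hXs : F ∈ X.support := by
          rcases Finset.mem_union.1 (Finsupp.support_sub h2) with h3 | h3
          · exact h3
          · rw [Finsupp.support_filter] at h3
            exact (Finset.mem_filter.1 h3).1
        have hnb : ¬ (u ∈ F ∧ v ∈ F) :=
          filter_compl_support (fun F => u ∈ F ∧ v ∈ F) X F h2
        exact ⟨(hΔ F).2 ⟨(hX F hXs).1, hnb⟩, (hX F hXs).2⟩
      · -- hm u D part
        obtain ⟨G, hG, huG, rfl⟩ := hm_supp u D F h2
        have hKG := (hDsupp G hG).1
        have hKG' := (hK G).1 hKG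
        constructor
        · rw [hΔ]
          refine ⟨hdc hKG'.2.2 ?_, ?_⟩
          · exact Finset.insert_subset_insert u (Finset.subset_insert v G)
          · rintro ⟨-, hvin⟩
            rcases Finset.mem_insert.1 hvin with h | h
            · exact huv h.symm
            · exact hKG'.2.1 h
        · rw [Finset.card_insert_of_notMem huG]
          have := (hDsupp G hG).2
          omega
    · -- hm v D part
      obtain ⟨G, hG, hvG, rfl⟩ := hm_supp v D F h1
      have hKG := (hDsupp G hG).1
      have hKG' := (hK G).1 hKG
      constructor
      · rw [hΔ]
        refine ⟨hdc hKG'.2.2 ?_, ?_⟩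
        · exact Finset.subset_insert u (insert v G)
        · rintro ⟨huin, -⟩
          rcases Finset.mem_insert.1 huin with h | h
          · exact huv h
          · exact hKG'.1 h
      · rw [Finset.card_insert_of_notMem hvG]
        have := (hDsupp G hG).2
        omega
  · intro F hF
    obtain ⟨G1, hG1, hvG1, rfl⟩ := hm_supp v _ F hF
    obtain ⟨G, hG, huG, rfl⟩ := hm_supp u D G1 hG1
    have hKG := (hDsupp G hG).1
    have hKG' := (hK G).1 hKG
    constructor
    · rw [Finset.insert_comm]
      exact hKG'.2.2
    · rw [Finset.card_insert_of_notMem hvG1, Finset.card_insert_of_notMem huG]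
      have := (hDsupp G hG).2
      omega

/-- boundary anticommutes with double contraction -/
lemma bd_phph (u v : V) (C : Finset V →₀ k) :
    bd k (ph k u (ph k v C)) = ph k u (ph k v (bd k C)) := by
  rw [eq_neg_of_add_eq_zero_left (I5 u (ph k v C)),
    eq_neg_of_add_eq_zero_left (I5 v C), map_neg, neg_neg]

/-- a chain without both u,v in any face is killed by the double contraction -/
lemma phph_of_noboth (u v : V) (z : Finset V →₀ k)
    (h : ∀ F ∈ z.support, ¬ (u ∈ F ∧ v ∈ F)) : ph k u (ph k v z) = 0 := by
  apply E1
  intro F hF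
  obtain ⟨G, hG, hvG, rfl⟩ := ph_supp v z F hF
  intro huG
  exact h G hG ⟨Finset.mem_of_mem_erase huG, hvG⟩

/-- MV2: the two transfer directions between Δ and Δ' = Δ ∪ star(uv), given apex w for the link -/
lemma NT_mv2_of (Δ Δ' K : Finset V → Prop) (u v w : V) (huv : u ≠ v)
    (hΔ : ∀ F, Δ F ↔ Δ' F ∧ ¬(u ∈ F ∧ v ∈ F))
    (hK : ∀ G, K G ↔ u ∉ G ∧ v ∉ G ∧ Δ' (insert u (insert v G)))
    (hdc : ∀ ⦃F G : Finset V⦄, Δ' F → G ⊆ F → Δ' G)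
    (hw : ∀ G, K G → K (insert w G))
    (j : ℕ) : (NT k Δ j → NT k Δ' j) ∧ (NT k Δ' j → NT k Δ j) := by
  constructor
  · rintro ⟨z, hCh, hcyc, hnb⟩
    have hz0 : bd k z = 0 := by
      rcases Nat.eq_zero_or_pos j with h0 | hpos
      · exact bd_card_zero z (fun F hF => h0 ▸ (hCh F hF).2)
      · exact hcyc (Nat.pos_iff_ne_zero.1 hpos)
    refine ⟨z, fun F hF => ⟨((hΔ F).1 (hCh F hF).1).1, (hCh F hF).2⟩, fun _ => hz0, ?_⟩
    intro C hC hbdC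
    have hC2 : bd k (ph k u (ph k v C)) = 0 := by
      rw [bd_phph, hbdC]
      exact phph_of_noboth u v z (fun F hF => ((hΔ F).1 (hCh F hF).1).2)
    obtain ⟨Y, P, hYP, hChY, hChP⟩ :=
      mv2_reduce Δ Δ' K u v w huv hΔ hK hdc hw (j+1) C hC hC2
    apply hnb Y hChY
    have : bd k C = bd k Y + bd k (bd k P) := by rw [← map_add, ← hYP]
    rw [bd_bd] at this
    rw [← hbdC, this, add_zero]
  · rintro ⟨z, hCh, hcyc, hnb⟩
    have hz0 : bd k z = 0 := by
      rcases Nat.eq_zero_or_pos j with h0 | hpos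
      · exact bd_card_zero z (fun F hF => h0 ▸ (hCh F hF).2)
      · exact hcyc (Nat.pos_iff_ne_zero.1 hpos)
    have hz2 : bd k (ph k u (ph k v z)) = 0 := by
      rw [bd_phph, hz0, map_zero, map_zero]
    obtain ⟨Y, P, hYP, hChY, hChP⟩ :=
      mv2_reduce Δ Δ' K u v w huv hΔ hK hdc hw j z hCh hz2
    refine ⟨Y, hChY, ?_, ?_⟩
    · intro _
      have h1 : bd k z = bd k Y + bd k (bd k P) := by rw [← map_add, ← hYP]
      rw [bd_bd, add_zero, hz0] at h1
      exact h1.symm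
    · intro E hE hbdE
      apply hnb (E + P)
      · intro F hF
        rcases Finset.mem_union.1 (Finsupp.support_add hF) with h | h
        · exact ⟨((hΔ F).1 (hE F h).1).1, (hE F h).2⟩
        · exact hChP F h
      · rw [map_add, hbdE, ← hYP]

section GraphLevel

lemma ICx_dc (G : SimpleGraph V) (S : Set V) :
    ∀ ⦃F G' : Finset V⦄, restrictC (indepFaces G) S F → G' ⊆ F →
      restrictC (indepFaces G) S G' := by
  rintro F F' ⟨hsub, hind⟩ hFF
  exact ⟨fun z hz => hsub (hFF hz), fun a ha b hb => hind a (hFF ha) b (hFF hb)⟩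

lemma adj_del_iff (H : SimpleGraph V) (u v a b : V) :
    (H.deleteEdges {s(u,v)}).Adj a b ↔
      H.Adj a b ∧ ¬(a = u ∧ b = v) ∧ ¬(a = v ∧ b = u) := by
  rw [SimpleGraph.deleteEdges_adj]
  constructor
  · rintro ⟨h1, h2⟩
    refine ⟨h1, ?_, ?_⟩
    · rintro ⟨rfl, rfl⟩; exact h2 rfl
    · rintro ⟨rfl, rfl⟩; exact h2 (Sym2.eq_swap)
  · rintro ⟨h1, h2, h3⟩
    refine ⟨h1, fun hc => ?_⟩
    rw [Set.mem_singleton_iff] at hc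
    rcases Sym2.eq_iff.1 hc with ⟨rfl, rfl⟩ | ⟨rfl, rfl⟩
    · exact h2 ⟨rfl, rfl⟩
    · exact h3 ⟨rfl, rfl⟩

lemma pred_eq_of_not_mem (H : SimpleGraph V) (u v : V) (S : Set V)
    (h : u ∉ S ∨ v ∉ S) :
    restrictC (indepFaces H) S = restrictC (indepFaces (H.deleteEdges {s(u,v)})) S := by
  funext F
  apply propext
  constructor
  · rintro ⟨hsub, hind⟩
    refine ⟨hsub, fun a ha b hb hadj => ?_⟩
    exact hind a ha b hb ((adj_del_iff H u v a b).1 hadj).1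
  · rintro ⟨hsub, hind⟩
    refine ⟨hsub, fun a ha b hb hadj => ?_⟩
    apply hind a ha b hb
    rw [adj_del_iff]
    refine ⟨hadj, ?_, ?_⟩
    · rintro ⟨rfl, rfl⟩
      rcases h with h | h
      · exact h (hsub ha)
      · exact h (hsub hb)
    · rintro ⟨rfl, rfl⟩
      rcases h with h | h
      · exact h (hsub hb)
      · exact h (hsub ha)

/-- the MV2 instantiation for independence complexes, giving both transfer directions -/
lemma mv2_graph (H : SimpleGraph V) (u v w : V) (he : H.Adj u v)
    (hwu : w ≠ u) (hwv : w ≠ v)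
    (hnuw : ¬ H.Adj u w) (hnvw : ¬ H.Adj v w)
    (hw2 : ∀ z, H.Adj w z → (z = u ∨ z = v ∨ H.Adj u z ∨ H.Adj v z))
    (S : Set V) (huS : u ∈ S) (hvS : v ∈ S) (hwS : w ∈ S) (j : ℕ) :
    (NT k (restrictC (indepFaces H) S) j →
      NT k (restrictC (indepFaces (H.deleteEdges {s(u,v)})) S) j) ∧
    (NT k (restrictC (indepFaces (H.deleteEdges {s(u,v)})) S) j →
      NT k (restrictC (indepFaces H) S) j) := by
  have hadj' : ∀ a b, (H.deleteEdges {s(u,v)}).Adj a b ↔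
      H.Adj a b ∧ ¬(a = u ∧ b = v) ∧ ¬(a = v ∧ b = u) := adj_del_iff H u v
  apply NT_mv2_of (Δ := restrictC (indepFaces H) S)
    (Δ' := restrictC (indepFaces (H.deleteEdges {s(u,v)})) S)
    (K := fun G => u ∉ G ∧ v ∉ G ∧
      restrictC (indepFaces (H.deleteEdges {s(u,v)})) S (insert u (insert v G)))
    (u := u) (v := v) (w := w) he.ne
  · -- hΔ
    intro F
    constructor
    · rintro ⟨hsub, hind⟩
      refine ⟨⟨hsub, fun a ha b hb hadj => hind a ha b hb ((hadj' a b).1 hadj).1⟩, ?_⟩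
      rintro ⟨huF, hvF⟩
      exact hind u huF v hvF he
    · rintro ⟨⟨hsub, hind⟩, hnb⟩
      refine ⟨hsub, fun a ha b hb hadj => ?_⟩
      apply hind a ha b hb
      rw [hadj']
      refine ⟨hadj, ?_, ?_⟩
      · rintro ⟨rfl, rfl⟩; exact hnb ⟨ha, hb⟩
      · rintro ⟨rfl, rfl⟩; exact hnb ⟨hb, ha⟩
  · intro G; exact Iff.rfl
  · exact ICx_dc _ S
  · -- apex w
    rintro G ⟨huG, hvG, hsub, hind⟩
    have hwne : ∀ z ∈ insert u (insert v G), ¬ H.Adj w z := by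
      intro z hz hadj
      rcases Finset.mem_insert.1 hz with rfl | hz2
      · exact hnuw hadj.symm
      rcases Finset.mem_insert.1 hz2 with rfl | hz3
      · exact hnvw hadj.symm
      have hzu : z ≠ u := fun h => huG (h ▸ hz3)
      have hzv : z ≠ v := fun h => hvG (h ▸ hz3)
      rcases hw2 z hadj with rfl | rfl | h | h
      · exact hzu rfl
      · exact hzv rfl
      · apply hind u (Finset.mem_insert_self u _) z hz
        rw [hadj']
        exact ⟨h, fun hc => hzv hc.2, fun hc => he.ne hc.1⟩
      · apply hind v (Finset.mem_insert_of_mem (Finset.mem_insert_self v _)) z hz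
        rw [hadj']
        exact ⟨h, fun hc => he.ne hc.1.symm, fun hc => hzu hc.2⟩
    have hmem : ∀ y ∈ insert u (insert v (insert w G)),
        y = w ∨ y ∈ insert u (insert v G) := by
      intro y hy
      rcases Finset.mem_insert.1 hy with rfl | hy2
      · exact Or.inr (Finset.mem_insert_self y _)
      rcases Finset.mem_insert.1 hy2 with rfl | hy3
      · exact Or.inr (Finset.mem_insert_of_mem (Finset.mem_insert_self y _))
      rcases Finset.mem_insert.1 hy3 with rfl | hy4
      · exact Or.inl rfl
      · exact Or.inr (Finset.mem_insert_of_mem (Finset.mem_insert_of_mem hy4))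
    refine ⟨?_, ?_, ?_, ?_⟩
    · intro hc
      rcases Finset.mem_insert.1 hc with h | h
      · exact hwu h.symm
      · exact huG h
    · intro hc
      rcases Finset.mem_insert.1 hc with h | h
      · exact hwv h.symm
      · exact hvG h
    · intro y hy
      rcases hmem y hy with rfl | h
      · exact hwS
      · exact hsub h
    · intro a ha b hb hadj
      have hAdjH : H.Adj a b := ((hadj' a b).1 hadj).1
      rcases hmem a ha with rfl | ha2
      · rcases hmem b hb with rfl | hb2
        · exact H.irrefl hAdjH
        · exact hwne b hb2 hAdjH
      · rcases hmem b hb with rfl | hb2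
        · exact hwne a ha2 hAdjH.symm
        · exact hind a ha2 b hb2 hadj

/-- the main flow: transferring nontriviality from G1 to G2 -/
lemma flow (G1 G2 : SimpleGraph V) (u v w x : V)
    (hwx : w ≠ x) (hwu : w ≠ u) (hwv : w ≠ v)
    (hnwu : ¬ G1.Adj w u) (hnwv : ¬ G1.Adj w v)
    (hG1ux : G1.Adj u x)
    (hAdjw : ∀ z, G1.Adj w z ↔ G2.Adj w z)
    (hG2wx : G2.Adj w x)
    (hG2x : ∀ z, G2.Adj x z → z = w ∨ z = u)
    (heq : ∀ S : Set V, (u ∉ S ∨ v ∉ S) →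
      restrictC (indepFaces G1) S = restrictC (indepFaces G2) S)
    (hmv2 : ∀ S : Set V, u ∈ S → v ∈ S → w ∈ S → ∀ j,
      NT k (restrictC (indepFaces G1) S) j → NT k (restrictC (indepFaces G2) S) j)
    (S : Set V) (j : ℕ) (hNT : NT k (restrictC (indepFaces G1) S) j) :
    ∃ S' : Set V, NT k (restrictC (indepFaces G2) S') j := by
  by_cases hu : u ∈ S
  swap
  · exact ⟨S, by rwa [heq S (Or.inl hu)] at hNT⟩
  by_cases hv : v ∈ S
  swap
  · exact ⟨S, by rwa [heq S (Or.inr hv)] at hNT⟩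
  by_cases hw : w ∈ S
  · exact ⟨S, hmv2 S hu hv hw j hNT⟩
  -- w ∉ S : first remove the neighbours of w
  have hstep1 := NT_mv_del (full := restrictC (indepFaces G1) (insert w S))
    (del := restrictC (indepFaces G1) S)
    (lk := restrictC (indepFaces G1) (S \ {z | G1.Adj w z})) w
    ?_ ?_ (ICx_dc G1 (insert w S)) j hNT
  rotate_left
  · -- del char
    intro F
    constructor
    · rintro ⟨hsub, hind⟩
      exact ⟨⟨fun z hz => Set.mem_insert_of_mem w (hsub hz), hind⟩,
        fun hc => hw (hsub hc)⟩
    · rintro ⟨⟨hsub, hind⟩, hwF⟩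
      refine ⟨fun z hz => ?_, hind⟩
      rcases Set.mem_insert_iff.1 (hsub hz) with rfl | h
      · exact absurd hz hwF
      · exact h
  · -- lk char
    intro G
    constructor
    · rintro ⟨hsub, hind⟩
      have hwG : w ∉ G := fun hc => hw (hsub hc).1
      refine ⟨hwG, fun z hz => ?_, fun a ha b hb hadj => ?_⟩
      · rcases Finset.mem_insert.1 (Finset.mem_coe.1 hz) with rfl | h
        · exact Set.mem_insert z S
        · exact Set.mem_insert_of_mem w (hsub h).1
      · rcases Finset.mem_insert.1 ha with rfl | ha2
        · rcases Finset.mem_insert.1 hb with rfl | hb2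
          · exact G1.irrefl hadj
          · exact (hsub hb2).2 hadj
        · rcases Finset.mem_insert.1 hb with rfl | hb2
          · exact (hsub ha2).2 hadj.symm
          · exact hind a ha2 b hb2 hadj
    · rintro ⟨hwG, hsub, hind⟩
      refine ⟨fun z hz => ?_, fun a ha b hb hadj =>
        hind a (Finset.mem_insert_of_mem ha) b (Finset.mem_insert_of_mem hb) hadj⟩
      have hz' : z ∈ G := hz
      constructor
      · rcases Set.mem_insert_iff.1 (hsub (Finset.mem_coe.2 (Finset.mem_insert_of_mem hz'))) with rfl | h
        · exact absurd hz' hwG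
        · exact h
      · intro hc
        exact hind w (Finset.mem_insert_self w G) z (Finset.mem_insert_of_mem hz') hc
  rcases hstep1 with hfull | hlk1
  · exact ⟨insert w S, hmv2 (insert w S) (Set.mem_insert_of_mem w hu)
      (Set.mem_insert_of_mem w hv) (Set.mem_insert w S) j hfull⟩
  -- now on S2 := S \ N(w)
  set S2 : Set V := S \ {z | G1.Adj w z} with hS2
  have hu2 : u ∈ S2 := ⟨hu, hnwu⟩
  have hv2 : v ∈ S2 := ⟨hv, hnwv⟩
  have hw2' : w ∉ S2 := fun hc => hw hc.1
  -- j ≠ 0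
  cases j with
  | zero =>
    exfalso
    apply NT_zero_of_vertex (restrictC (indepFaces G1) S2) u _ hlk1
    exact ⟨by simp [hu2], fun a ha b hb hadj => by
      rw [Finset.mem_singleton] at ha hb
      exact G1.irrefl (ha ▸ hb ▸ hadj)⟩
  | succ m =>
  -- MV at u (degree drop)
  have hstep2 := NT_mv_full (full := restrictC (indepFaces G1) S2)
    (del := restrictC (indepFaces G1) (S2 \ {u}))
    (lk := restrictC (indepFaces G1) (S2 \ {z | z = u ∨ G1.Adj u z})) u
    ?_ ?_ (ICx_dc G1 S2) m hlk1
  rotate_left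
  · -- del char
    intro F
    constructor
    · rintro ⟨hsub, hind⟩
      exact ⟨⟨fun z hz => (hsub hz).1, hind⟩, fun hc => (hsub hc).2 rfl⟩
    · rintro ⟨⟨hsub, hind⟩, huF⟩
      exact ⟨fun z hz => ⟨hsub hz, fun hc => huF (hc ▸ hz)⟩, hind⟩
  · -- lk char
    intro G
    constructor
    · rintro ⟨hsub, hind⟩
      have huG : u ∉ G := fun hc => (hsub hc).2 (Or.inl rfl)
      refine ⟨huG, fun z hz => ?_, fun a ha b hb hadj => ?_⟩
      · rcases Finset.mem_insert.1 (Finset.mem_coe.1 hz) with rfl | h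
        · exact hu2
        · exact (hsub h).1
      · rcases Finset.mem_insert.1 ha with rfl | ha2
        · rcases Finset.mem_insert.1 hb with rfl | hb2
          · exact G1.irrefl hadj
          · exact (hsub hb2).2 (Or.inr hadj)
        · rcases Finset.mem_insert.1 hb with rfl | hb2
          · exact (hsub ha2).2 (Or.inr hadj.symm)
          · exact hind a ha2 b hb2 hadj
    · rintro ⟨huG, hsub, hind⟩
      refine ⟨fun z hz => ?_, fun a ha b hb hadj =>
        hind a (Finset.mem_insert_of_mem ha) b (Finset.mem_insert_of_mem hb) hadj⟩
      have hz' : z ∈ G := hz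
      refine ⟨hsub (Finset.mem_coe.2 (Finset.mem_insert_of_mem hz')), ?_⟩
      rintro (rfl | hc)
      · exact huG hz'
      · exact hind u (Finset.mem_insert_self u G) z (Finset.mem_insert_of_mem hz') hc
  rcases hstep2 with hdel2 | hlk2
  · refine ⟨S2 \ {u}, ?_⟩
    rwa [heq (S2 \ {u}) (Or.inl (fun hc => hc.2 rfl))] at hdel2
  -- suspension over S3
  set S3 : Set V := S2 \ {z | z = u ∨ G1.Adj u z} with hS3
  have hu3 : u ∉ S3 := fun hc => hc.2 (Or.inl rfl)
  have hx3 : x ∉ S3 := fun hc => hc.2 (Or.inr hG1ux)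
  have hw3 : w ∉ S3 := fun hc => hw2' hc.1
  rw [heq S3 (Or.inl hu3)] at hlk2
  refine ⟨insert w (insert x S3), ?_⟩
  apply NT_susp (K := restrictC (indepFaces G2) S3) _ w x hwx ?_ ?_ ?_ m hlk2
  · -- K avoids w, x
    rintro F ⟨hsub, -⟩
    constructor
    · intro hc; exact hw3 (hsub hc)
    · intro hc; exact hx3 (hsub hc)
  · -- inserting w or x stays in Λ
    rintro F ⟨hsub, hind⟩
    have hFS3 : ∀ z ∈ F, z ∈ S3 := fun z hz => hsub hz
    have hnwz : ∀ z ∈ F, ¬ G2.Adj w z := by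
      intro z hz hc
      exact ((hFS3 z hz).1).2 ((hAdjw z).2 hc)
    have hnxz : ∀ z ∈ F, ¬ G2.Adj x z := by
      intro z hz hc
      rcases hG2x z hc with rfl | rfl
      · exact hw3 (hFS3 z hz)
      · exact hu3 (hFS3 z hz)
    constructor
    · refine ⟨fun z hz => ?_, fun a ha b hb hadj => ?_⟩
      · rcases Finset.mem_insert.1 (Finset.mem_coe.1 hz) with rfl | h
        · exact Set.mem_insert z _
        · exact Set.mem_insert_of_mem w (Set.mem_insert_of_mem x (hFS3 z h))
      · rcases Finset.mem_insert.1 ha with rfl | ha2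
        · rcases Finset.mem_insert.1 hb with rfl | hb2
          · exact G2.irrefl hadj
          · exact hnwz b hb2 hadj
        · rcases Finset.mem_insert.1 hb with rfl | hb2
          · exact hnwz a ha2 hadj.symm
          · exact hind a ha2 b hb2 hadj
    · refine ⟨fun z hz => ?_, fun a ha b hb hadj => ?_⟩
      · rcases Finset.mem_insert.1 (Finset.mem_coe.1 hz) with rfl | h
        · exact Set.mem_insert_of_mem w (Set.mem_insert z _)
        · exact Set.mem_insert_of_mem w (Set.mem_insert_of_mem x (hFS3 z h))
      · rcases Finset.mem_insert.1 ha with rfl | ha2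
        · rcases Finset.mem_insert.1 hb with rfl | hb2
          · exact G2.irrefl hadj
          · exact hnxz b hb2 hadj
        · rcases Finset.mem_insert.1 hb with rfl | hb2
          · exact hnxz a ha2 hadj.symm
          · exact hind a ha2 b hb2 hadj
  · -- erasing w from a Λ-face lands in K
    rintro F ⟨hsub, hind⟩ hwF
    have hxF : x ∉ F := by
      intro hxF
      exact hind w hwF x hxF hG2wx
    refine ⟨fun z hz => ?_, fun a ha b hb hadj =>
      hind a (Finset.mem_of_mem_erase ha) b (Finset.mem_of_mem_erase hb) hadj⟩
    have hz' : z ∈ F.erase w := hz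
    have hzw : z ≠ w := Finset.ne_of_mem_erase hz'
    have hzF : z ∈ F := Finset.mem_of_mem_erase hz'
    rcases Set.mem_insert_iff.1 (hsub (Finset.mem_coe.2 hzF)) with rfl | h
    · exact absurd rfl hzw
    rcases Set.mem_insert_iff.1 h with rfl | h2
    · exact absurd hzF hxF
    · exact h2

end GraphLevel

lemma regC_eq_of_iff {V : Type} [Fintype V] {k : Type} [Field k] (D D' : Finset V → Prop)
    (h : ∀ (inst : LinearOrder V) (j : ℕ),
      (∃ S : Set V, @HNontrivial V k _ inst (restrictC D S) j) ↔
      (∃ S : Set V, @HNontrivial V k _ inst (restrictC D' S) j)) :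
    regC k D = regC k D' := by
  unfold regC
  congr 1
  ext j
  exact h _ j

/-- the central auxiliary lemma, after the WLOG normalization `H.Adj u x` -/
lemma main_aux {V : Type} [Fintype V] (k : Type) [Field k]
    (H : SimpleGraph V) (u v w x : V) (he : H.Adj u v)
    (hwu : w ≠ u) (hwv : w ≠ v) (hnuw : ¬ H.Adj u w) (hnvw : ¬ H.Adj v w)
    (hw2 : ∀ z, H.Adj w z → (z = u ∨ z = v ∨ H.Adj u z ∨ H.Adj v z))
    (hx : H.Adj w x) (hxu : H.Adj u x)
    (hNx : ∀ z, H.Adj x z → z = w ∨ z = u) :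
    gReg k H = gReg k (H.deleteEdges {s(u,v)}) := by
  apply regC_eq_of_iff
  intro inst j
  letI := inst
  set H' := H.deleteEdges {s(u,v)} with hH'
  have hadj' : ∀ a b, H'.Adj a b ↔ H.Adj a b ∧ ¬(a = u ∧ b = v) ∧ ¬(a = v ∧ b = u) :=
    adj_del_iff H u v
  have hwx : w ≠ x := hx.ne
  have hxv : x ≠ v := by
    rintro rfl
    exact hnvw hx.symm
  have hnwu : ¬ H.Adj w u := fun h => hnuw h.symm
  have hnwv : ¬ H.Adj w v := fun h => hnvw h.symm
  have hAdjw : ∀ z, H.Adj w z ↔ H'.Adj w z := by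
    intro z
    rw [hadj']
    constructor
    · intro h
      exact ⟨h, fun hc => hwu hc.1, fun hc => hwv hc.1⟩
    · intro h; exact h.1
  have hG2wx : H'.Adj w x := by
    rw [hadj']
    exact ⟨hx, fun hc => hwu hc.1, fun hc => hwv hc.1⟩
  have hG1ux' : H'.Adj u x := by
    rw [hadj']
    exact ⟨hxu, fun hc => hxv hc.2, fun hc => he.ne hc.1⟩
  have hNx' : ∀ z, H'.Adj x z → z = w ∨ z = u := fun z h => hNx z ((hadj' x z).1 h).1
  constructor
  · rintro ⟨S, hS⟩
    rw [← NT_iff_HNontrivial _ (fun F G hF hG => ICx_dc H S hF hG) j] at hS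
    obtain ⟨S', hS'⟩ := flow H H' u v w x hwx hwu hwv hnwu hnwv hxu hAdjw hG2wx hNx'
      (fun S h => pred_eq_of_not_mem H u v S h)
      (fun S hu hv hw j => (mv2_graph H u v w he hwu hwv hnuw hnvw hw2 S hu hv hw j).1)
      S j hS
    exact ⟨S', (NT_iff_HNontrivial _ (fun F G hF hG => ICx_dc H' S' hF hG) j).1 hS'⟩
  · rintro ⟨S, hS⟩
    rw [← NT_iff_HNontrivial _ (fun F G hF hG => ICx_dc H' S hF hG) j] at hS
    obtain ⟨S', hS'⟩ := flow H' H u v w x hwx hwu hwv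
      (fun h => hnuw (((hadj' w u).1 h).1.symm))
      (fun h => hnvw (((hadj' w v).1 h).1.symm))
      hG1ux'
      (fun z => ((hAdjw z).symm))
      hx hNx
      (fun S h => (pred_eq_of_not_mem H u v S h).symm)
      (fun S hu hv hw j => (mv2_graph H u v w he hwu hwv hnuw hnvw hw2 S hu hv hw j).2)
      S j hS
    exact ⟨S', (NT_iff_HNontrivial _ (fun F G hF hG => ICx_dc H S' hF hG) j).1 hS'⟩

/-- the neighbours of a degree-two vertex -/
lemma nbrs_of_degree_two {V : Type} [Fintype V] (H : SimpleGraph V) (x w y : V)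
    (hwy : w ≠ y) (h1 : H.Adj x w) (h2 : H.Adj x y) (hdeg : H.degree x = 2) :
    ∀ z, H.Adj x z → z = w ∨ z = y := by
  classical
  have hsub : ({w, y} : Finset V) ⊆ H.neighborFinset x := by
    intro z hz
    rcases Finset.mem_insert.1 hz with rfl | hz2
    · exact (SimpleGraph.mem_neighborFinset H x z).2 h1
    · rw [Finset.mem_singleton] at hz2
      subst hz2
      exact (SimpleGraph.mem_neighborFinset H x z).2 h2
  have hcard : ({w, y} : Finset V).card = 2 := by
    rw [Finset.card_insert_of_notMem (by simp [hwy]), Finset.card_singleton]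
  have hdeg' : (H.neighborFinset x).card = 2 := hdeg
  have heqs : ({w, y} : Finset V) = H.neighborFinset x :=
    Finset.eq_of_subset_of_card_le hsub (by rw [hdeg', hcard])
  intro z hz
  have : z ∈ ({w, y} : Finset V) := by
    rw [heqs]
    exact (SimpleGraph.mem_neighborFinset H x z).2 hz
  rcases Finset.mem_insert.1 this with h | h
  · exact Or.inl h
  · exact Or.inr (Finset.mem_singleton.1 h)


end EdgeDel

/-- If `e = (u,v)` is an isolating edge of `H` with respect
to `w` (i.e. `w` is isolated in `H - N_H[e]`), and `w` has a neighbor `x` of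
degree two, then `reg(H) = reg(H - e)`. -/
theorem gReg_deleteEdge_of_isolating {V : Type} [Fintype V] (k : Type) [Field k]
    (H : SimpleGraph V) (u v w x : V) (he : H.Adj u v)
    (hw1 : w ∉ ({z | z = u ∨ z = v ∨ H.Adj u z ∨ H.Adj v z} : Set V))
    (hw2 : ∀ z, H.Adj w z → z ∈ ({z | z = u ∨ z = v ∨ H.Adj u z ∨ H.Adj v z} : Set V))
    (hx : H.Adj w x) (hdeg : H.degree x = 2) :
    gReg k H = gReg k (H.deleteEdges {s(u, v)}) := by
  have hw1' : ¬(w = u ∨ w = v ∨ H.Adj u w ∨ H.Adj v w) := hw1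
  push_neg at hw1'
  obtain ⟨hwu, hwv, hnuw, hnvw⟩ := hw1'
  have hw2' : ∀ z, H.Adj w z → (z = u ∨ z = v ∨ H.Adj u z ∨ H.Adj v z) := fun z h => hw2 z h
  have hxu_ne : x ≠ u := by
    rintro rfl
    exact hnuw hx.symm
  have hxv_ne : x ≠ v := by
    rintro rfl
    exact hnvw hx.symm
  have hxor : H.Adj u x ∨ H.Adj v x := by
    rcases hw2' x hx with h | h | h | h
    · exact absurd h hxu_ne
    · exact absurd h hxv_ne
    · exact Or.inl h
    · exact Or.inr h
  rcases hxor with hxu | hxv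
  · have hNx : ∀ z, H.Adj x z → z = w ∨ z = u :=
      EdgeDel.nbrs_of_degree_two H x w u hwu hx.symm hxu.symm hdeg
    exact EdgeDel.main_aux k H u v w x he hwu hwv hnuw hnvw hw2' hx hxu hNx
  · have hNx : ∀ z, H.Adj x z → z = w ∨ z = v :=
      EdgeDel.nbrs_of_degree_two H x w v hwv hx.symm hxv.symm hdeg
    have hswap : s(u, v) = s(v, u) := Sym2.eq_swap
    rw [hswap]
    exact EdgeDel.main_aux k H v u w x he.symm hwv hwu hnvw hnuw
      (fun z h => by
        rcases hw2' z h with h1 | h1 | h1 | h1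
        · exact Or.inr (Or.inl h1)
        · exact Or.inl h1
        · exact Or.inr (Or.inr (Or.inr h1))
        · exact Or.inr (Or.inr (Or.inl h1))) hx hxv hNx
end
end

section
/- For any graph G, reg(G) ≤ im(G) + ∇(G), i.e., the Castelnuovo–Mumford regularity of the independence complex is at most the sum of the induced matching number and the decycling number. -/
open scoped Classical

noncomputable section Aux
open scoped Classical
open Finset

namespace RegAux

variable {V : Type} [LinearOrder V] (k : Type) [Field k]

/-- the sign `(-1)^{#{z ∈ F | z < x}}`. -/
def sgn (F : Finset V) (x : V) : k := (-1 : k) ^ (F.filter (fun z => z < x)).card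

lemma sgn_sq (F : Finset V) (x : V) : sgn k F x * sgn k F x = 1 := by
  rw [sgn, ← mul_pow]; norm_num

lemma sgn_mul_antisymm (F : Finset V) {x y : V} (hx : x ∈ F) (hy : y ∈ F) (hxy : x ≠ y) :
    sgn k F x * sgn k (F.erase x) y = -(sgn k F y * sgn k (F.erase y) x) := by
  have core : ∀ {a b : V}, a ∈ F → b ∈ F → a < b →
      sgn k F a * sgn k (F.erase a) b = -(sgn k F b * sgn k (F.erase b) a) := by
    intro a b ha hb hab
    have h1 : (F.erase a).filter (fun z => z < b) = (F.filter (fun z => z < b)).erase a :=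
      Finset.filter_erase _ _ _
    have h2 : (F.erase b).filter (fun z => z < a) = F.filter (fun z => z < a) := by
      rw [Finset.filter_erase, Finset.erase_eq_of_notMem]
      simp only [Finset.mem_filter, not_and]
      intro _ h; exact absurd (h.trans hab) (lt_irrefl b)
    have hmem : a ∈ F.filter (fun z => z < b) := Finset.mem_filter.2 ⟨ha, hab⟩
    have h3 : ((F.filter (fun z => z < b)).erase a).card + 1 =
        (F.filter (fun z => z < b)).card := Finset.card_erase_add_one hmem
    unfold sgn
    rw [h1, h2, ← h3, pow_succ]
    ring
  rcases hxy.lt_or_gt with h | h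
  · exact core hx hy h
  · rw [core hy hx h]; ring

lemma sgn_mul_antisymm' (F : Finset V) {x y : V} (hx : x ∈ F) (hy : y ∈ F) (hxy : x ≠ y) :
    sgn k F x * sgn k F y = -(sgn k (F.erase x) y * sgn k (F.erase y) x) := by
  have h := sgn_mul_antisymm k F hx hy hxy
  have hB := sgn_sq k (F.erase x) y
  have hC := sgn_sq k F y
  linear_combination (sgn k (F.erase x) y * sgn k F y) * h -
    (sgn k F x * sgn k F y) * hB -
    (sgn k (F.erase x) y * sgn k (F.erase y) x) * hC

end RegAux

namespace RegAux

variable {V : Type} [LinearOrder V] (k : Type) [Field k]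

/-- elementary chain on a finset, `0` if it is not a face of the right size. -/
def felem (Δ : Finset V → Prop) (n : ℕ) (E : Finset V) : Faces Δ n →₀ k :=
  if h : Δ E ∧ E.card = n then Finsupp.single ⟨E, h⟩ 1 else 0

lemma felem_of {Δ : Finset V → Prop} {n : ℕ} {E : Finset V} (h : Δ E ∧ E.card = n) :
    felem k Δ n E = Finsupp.single (⟨E, h⟩ : Faces Δ n) 1 := dif_pos h

lemma felem_of_not {Δ : Finset V → Prop} {n : ℕ} {E : Finset V}
    (h : ¬(Δ E ∧ E.card = n)) : felem k Δ n E = 0 := dif_neg h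

/-- generic linear map out of a chain module, determined on elementary chains. -/
def mkMap {Δ₁ Δ₂ : Finset V → Prop} {m n : ℕ}
    (t : Finset V → (Faces Δ₂ n →₀ k)) :
    (Faces Δ₁ m →₀ k) →ₗ[k] (Faces Δ₂ n →₀ k) :=
  Finsupp.lsum k fun F => LinearMap.toSpanSingleton k _ (t F.1)

lemma mkMap_single {Δ₁ Δ₂ : Finset V → Prop} {m n : ℕ}
    (t : Finset V → (Faces Δ₂ n →₀ k)) (a : Faces Δ₁ m) (c : k) :
    mkMap k t (Finsupp.single a c) = c • t a.1 := by
  simp [mkMap, Finsupp.lsum_single, LinearMap.toSpanSingleton_apply]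

lemma cxBoundary_single {Δ : Finset V → Prop} (n : ℕ) (a : Faces Δ (n + 1)) (c : k) :
    cxBoundary k Δ n (Finsupp.single a c) =
      c • ∑ z ∈ a.1, sgn k a.1 z • felem k Δ n (a.1.erase z) := by
  unfold cxBoundary
  rw [Finsupp.lsum_single, LinearMap.toSpanSingleton_apply]
  congr 1
  rw [← Finset.sum_attach a.1 (fun z => sgn k a.1 z • felem k Δ n (a.1.erase z))]
  rfl

end RegAux

namespace RegAux

variable {V : Type} [LinearOrder V] (k : Type) [Field k]

lemma bdry_felem {Δ : Finset V → Prop} (hΔ : IsComplex Δ) (n : ℕ) {E : Finset V}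
    (hE : Δ E) (hc : E.card = n + 1) :
    cxBoundary k Δ n (felem k Δ (n + 1) E) =
      ∑ z ∈ E, sgn k E z • felem k Δ n (E.erase z) := by
  rw [felem_of k ⟨hE, hc⟩]
  exact (cxBoundary_single (Δ := Δ) k n ⟨E, hE, hc⟩ 1).trans (one_smul _ _)

lemma bdry_bdry {Δ : Finset V → Prop} (hΔ : IsComplex Δ) (n : ℕ) :
    (cxBoundary k Δ n).comp (cxBoundary k Δ (n + 1)) = 0 := by
  apply Finsupp.lhom_ext
  intro a c
  simp only [LinearMap.comp_apply, LinearMap.zero_apply]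
  rw [cxBoundary_single, map_smul, map_sum]
  have key : ∀ z ∈ a.1, cxBoundary k Δ n (sgn k a.1 z • felem k Δ (n + 1) (a.1.erase z)) =
      ∑ y ∈ a.1, if y = z then 0 else
        (sgn k a.1 z * sgn k (a.1.erase z) y) • felem k Δ n ((a.1.erase z).erase y) := by
    intro z hz
    rw [map_smul, bdry_felem k hΔ n (hΔ a.2.1 (Finset.erase_subset _ _))
      (by rw [Finset.card_erase_of_mem hz, a.2.2]; omega), Finset.smul_sum]
    rw [← Finset.sum_erase a.1 (a := z)
      (f := fun y => if y = z then 0 else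
        (sgn k a.1 z * sgn k (a.1.erase z) y) • felem k Δ n ((a.1.erase z).erase y))
      (by simp)]
    refine Finset.sum_congr rfl fun y hy => ?_
    rw [if_neg (Finset.ne_of_mem_erase hy), smul_smul]
  rw [Finset.sum_congr rfl key, ← Finset.sum_product']
  have hzero : ∑ p ∈ a.1 ×ˢ a.1, (if p.2 = p.1 then 0 else
      (sgn k a.1 p.1 * sgn k (a.1.erase p.1) p.2) •
        felem k Δ n ((a.1.erase p.1).erase p.2)) = 0 := by
    refine Finset.sum_involution (fun p _ => p.swap) ?_ ?_ ?_ ?_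
    · rintro ⟨z, y⟩ hp
      rcases eq_or_ne y z with h | h
      · subst h; simp
      · dsimp only [Prod.swap_prod_mk]
        rw [if_neg h, if_neg (Ne.symm h),
          Finset.erase_right_comm (a := y) (b := z), ← add_smul]
        have hp1 : z ∈ a.1 := (Finset.mem_product.1 hp).1
        have hp2 : y ∈ a.1 := (Finset.mem_product.1 hp).2
        rw [sgn_mul_antisymm k a.1 hp1 hp2 (Ne.symm h)]
        simp
    · rintro ⟨z, y⟩ _ hne hsw
      apply hne
      dsimp only [Prod.swap_prod_mk] at hsw ⊢
      rw [Prod.mk.injEq] at hsw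
      simp [hsw.2]
    · rintro ⟨z, y⟩ hp
      rw [Finset.mem_product] at hp ⊢
      exact ⟨hp.2, hp.1⟩
    · rintro ⟨z, y⟩ _; rfl
  rw [hzero, smul_zero]

end RegAux

namespace RegAux

variable {V : Type} [LinearOrder V] (k : Type) [Field k]

lemma isComplex_del {Δ : Finset V → Prop} (hΔ : IsComplex Δ) (x : V) :
    IsComplex (delC Δ x) := by
  intro F G hF hsub
  exact ⟨hΔ hF.1 hsub, fun hx => hF.2 (hsub hx)⟩

lemma isComplex_lk {Δ : Finset V → Prop} (hΔ : IsComplex Δ) (x : V) :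
    IsComplex (lkC Δ x) := by
  intro F G hF hsub
  refine ⟨fun hx => hF.1 (hsub hx), hΔ hF.2 ?_⟩
  intro z hz
  simp only [Finset.mem_insert] at hz ⊢
  rcases hz with h | h
  · exact Or.inl h
  · exact Or.inr (hsub h)

lemma mkMap_felem {Δ₁ Δ₂ : Finset V → Prop} {m n : ℕ}
    (t : Finset V → (Faces Δ₂ n →₀ k)) (E : Finset V) :
    (mkMap k t : (Faces Δ₁ m →₀ k) →ₗ[k] _) (felem k Δ₁ m E) =
      if h : Δ₁ E ∧ E.card = m then t E else 0 := by
  unfold felem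
  split
  · rename_i h
    exact (mkMap_single (Δ₁ := Δ₁) (m := m) k t ⟨E, h⟩ 1).trans (one_smul _ _)
  · rw [map_zero]

lemma single_eq_smul_felem {Δ : Finset V → Prop} {n : ℕ} (a : Faces Δ n) (c : k) :
    Finsupp.single a c = c • felem k Δ n a.1 := by
  rw [felem_of k a.2]
  show Finsupp.single a c = c • Finsupp.single a 1
  rw [Finsupp.smul_single, smul_eq_mul, mul_one]

/-- inclusion of the deletion subcomplex. -/
def iot (Δ : Finset V → Prop) (x : V) (n : ℕ) :
    (Faces (delC Δ x) n →₀ k) →ₗ[k] (Faces Δ n →₀ k) :=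
  mkMap k (fun F => felem k Δ n F)

/-- projection onto the deletion subcomplex. -/
def phi (Δ : Finset V → Prop) (x : V) (n : ℕ) :
    (Faces Δ n →₀ k) →ₗ[k] (Faces (delC Δ x) n →₀ k) :=
  mkMap k (fun F => felem k (delC Δ x) n F)

/-- coefficient-of-`x` map to the link. -/
def psi (Δ : Finset V → Prop) (x : V) (n : ℕ) :
    (Faces Δ (n + 1) →₀ k) →ₗ[k] (Faces (lkC Δ x) n →₀ k) :=
  mkMap k (fun F => sgn k F x • felem k (lkC Δ x) n (F.erase x))

/-- insertion of `x`, from the link to the complex. -/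
def sig (Δ : Finset V → Prop) (x : V) (n : ℕ) :
    (Faces (lkC Δ x) n →₀ k) →ₗ[k] (Faces Δ (n + 1) →₀ k) :=
  mkMap k (fun F => sgn k (insert x F) x • felem k Δ (n + 1) (insert x F))

lemma phi_iot (Δ : Finset V → Prop) (x : V) (n : ℕ) :
    (phi k Δ x n).comp (iot k Δ x n) = LinearMap.id := by
  apply Finsupp.lhom_ext
  intro a c
  simp only [LinearMap.comp_apply, LinearMap.id_apply]
  rw [single_eq_smul_felem, map_smul, map_smul]
  unfold iot
  rw [mkMap_felem k _ _ , dif_pos ⟨a.2.1, a.2.2⟩]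
  unfold phi
  rw [mkMap_felem k _ _, dif_pos ⟨a.2.1.1, a.2.2⟩]

lemma bdry_iot {Δ : Finset V → Prop} (hΔ : IsComplex Δ) (x : V) (n : ℕ) :
    (cxBoundary k Δ n).comp (iot k Δ x (n + 1)) =
      (iot k Δ x n).comp (cxBoundary k (delC Δ x) n) := by
  apply Finsupp.lhom_ext
  intro a c
  simp only [LinearMap.comp_apply]
  rw [single_eq_smul_felem]
  simp only [map_smul]
  congr 1
  unfold iot
  rw [mkMap_felem k _ _, dif_pos ⟨a.2.1, a.2.2⟩]
  rw [bdry_felem k hΔ n a.2.1.1 a.2.2]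
  rw [bdry_felem k (isComplex_del hΔ x) n a.2.1 a.2.2]
  rw [map_sum]
  refine Finset.sum_congr rfl fun z hz => ?_
  rw [map_smul, mkMap_felem k _ _, dif_pos
    ⟨⟨hΔ a.2.1.1 (Finset.erase_subset _ _), fun hx => a.2.1.2 (Finset.erase_subset _ _ hx)⟩,
      by rw [Finset.card_erase_of_mem hz, a.2.2]; omega⟩]

end RegAux

namespace RegAux

variable {V : Type} [LinearOrder V] (k : Type) [Field k]

lemma lk_face_of_mem {Δ : Finset V → Prop} {F : Finset V} {x : V}
    (hF : Δ F) (hxF : x ∈ F) : lkC Δ x (F.erase x) := by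
  refine ⟨Finset.notMem_erase _ _, ?_⟩
  convert hF using 1
  ext z
  simp only [Finset.mem_insert, Finset.mem_erase]
  constructor
  · rintro (rfl | ⟨_, h⟩)
    · exact hxF
    · exact h
  · intro h
    by_cases hz : z = x
    · exact Or.inl hz
    · exact Or.inr ⟨hz, h⟩

lemma face_insert_of_lk {Δ : Finset V → Prop} {E : Finset V} {x : V}
    (hE : lkC Δ x E) : Δ (insert x E) := by
  convert hE.2 using 1
  ext z
  simp only [Finset.mem_insert]

lemma psi_felem {Δ : Finset V → Prop} (x : V) (n : ℕ) (E : Finset V) :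
    psi k Δ x n (felem k Δ (n + 1) E) =
      if _ : Δ E ∧ E.card = n + 1 then sgn k E x • felem k (lkC Δ x) n (E.erase x)
      else 0 :=
  mkMap_felem k _ E

lemma sig_felem {Δ : Finset V → Prop} (x : V) (n : ℕ) (E : Finset V) :
    sig k Δ x n (felem k (lkC Δ x) n E) =
      if _ : lkC Δ x E ∧ E.card = n then
        sgn k (insert x E) x • felem k Δ (n + 1) (insert x E)
      else 0 :=
  mkMap_felem k _ E

lemma iot_felem (Δ : Finset V → Prop) (x : V) (n : ℕ) (E : Finset V) :
    iot k Δ x n (felem k (delC Δ x) n E) =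
      if _ : delC Δ x E ∧ E.card = n then felem k Δ n E else 0 :=
  mkMap_felem k _ E

lemma phi_felem (Δ : Finset V → Prop) (x : V) (n : ℕ) (E : Finset V) :
    phi k Δ x n (felem k Δ n E) =
      if _ : Δ E ∧ E.card = n then felem k (delC Δ x) n E else 0 :=
  mkMap_felem k _ E

lemma psi_sig {Δ : Finset V → Prop} (x : V) (n : ℕ) :
    (psi k Δ x n).comp (sig k Δ x n) = LinearMap.id := by
  apply Finsupp.lhom_ext
  intro a c
  simp only [LinearMap.comp_apply, LinearMap.id_apply]
  rw [single_eq_smul_felem]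
  simp only [map_smul]
  congr 1
  have hx : x ∉ a.1 := a.2.1.1
  have hins : Δ (insert x a.1) := face_insert_of_lk a.2.1
  have hcard : (insert x a.1).card = n + 1 := by
    rw [Finset.card_insert_of_notMem hx, a.2.2]
  rw [sig_felem, dif_pos a.2, map_smul, psi_felem, dif_pos ⟨hins, hcard⟩,
    Finset.erase_insert hx, smul_smul, sgn_sq, one_smul]

lemma psi_bdry {Δ : Finset V → Prop} (hΔ : IsComplex Δ) (x : V) (n : ℕ) :
    (psi k Δ x n).comp (cxBoundary k Δ (n + 1)) =
      -((cxBoundary k (lkC Δ x) n).comp (psi k Δ x (n + 1))) := by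
  apply Finsupp.lhom_ext
  intro a c
  simp only [LinearMap.comp_apply, LinearMap.neg_apply]
  rw [cxBoundary_single, map_smul, map_sum]
  by_cases hxF : x ∈ a.1
  · -- right-hand side
    have hlk : lkC Δ x (a.1.erase x) := lk_face_of_mem a.2.1 hxF
    have hlkc : (a.1.erase x).card = n + 1 := by
      rw [Finset.card_erase_of_mem hxF, a.2.2]; omega
    rw [single_eq_smul_felem, map_smul, psi_felem, dif_pos a.2, map_smul, map_smul,
      bdry_felem k (isComplex_lk hΔ x) n hlk hlkc]
    rw [← smul_neg c]
    -- left-hand side: kill the `z = x` term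
    rw [← Finset.sum_erase (a.1) (a := x)
      (f := fun z => (psi k Δ x n) (sgn k a.1 z • felem k Δ (n + 1) (a.1.erase z)))
      (by
        show (psi k Δ x n) (sgn k a.1 x • felem k Δ (n + 1) (a.1.erase x)) = 0
        have hnot1 : ¬(lkC Δ x (a.1.erase x) ∧ (a.1.erase x).card = n) := by
          rintro ⟨-, hc⟩
          have := hlkc
          omega
        rw [map_smul, psi_felem, dif_pos ⟨hΔ a.2.1 (Finset.erase_subset _ _), hlkc⟩,
          Finset.erase_eq_of_notMem (Finset.notMem_erase _ _),
          felem_of_not k hnot1]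
        simp)]
    congr 1
    rw [Finset.smul_sum, ← Finset.sum_neg_distrib]
    refine Finset.sum_congr rfl fun z hz => ?_

    have hzx : z ≠ x := Finset.ne_of_mem_erase hz
    have hzF : z ∈ a.1 := Finset.mem_of_mem_erase hz
    rw [map_smul, psi_felem, dif_pos ⟨hΔ a.2.1 (Finset.erase_subset _ _),
      by rw [Finset.card_erase_of_mem hzF, a.2.2]; omega⟩]
    rw [smul_smul, smul_smul, Finset.erase_right_comm (a := z) (b := x),
      sgn_mul_antisymm k a.1 hzF hxF hzx, neg_smul]
  · -- both sides vanish
    have h1 : ∀ z ∈ a.1, (psi k Δ x n) (sgn k a.1 z • felem k Δ (n + 1) (a.1.erase z)) = 0 := by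
      intro z hz
      have hcz : (a.1.erase z).card = n + 1 := by
        rw [Finset.card_erase_of_mem hz, a.2.2]; omega
      have hnot2 : ¬(lkC Δ x (a.1.erase z) ∧ (a.1.erase z).card = n) := by
        rintro ⟨-, hc⟩
        have := hcz
        omega
      rw [map_smul, psi_felem, dif_pos ⟨hΔ a.2.1 (Finset.erase_subset _ _), hcz⟩,
        Finset.erase_eq_of_notMem (fun hc => hxF (Finset.mem_of_mem_erase hc)),
        felem_of_not k hnot2]
      simp
    rw [Finset.sum_congr rfl h1]
    have hnot3 : ¬(lkC Δ x a.1 ∧ a.1.card = n + 1) := by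
      rintro ⟨-, hc⟩
      have := a.2.2
      omega
    rw [single_eq_smul_felem, map_smul, psi_felem, dif_pos a.2,
      Finset.erase_eq_of_notMem hxF,
      felem_of_not k hnot3]
    simp

lemma iot_phi_add_sig_psi {Δ : Finset V → Prop} (x : V) (n : ℕ) :
    (iot k Δ x (n + 1)).comp (phi k Δ x (n + 1)) +
      (sig k Δ x n).comp (psi k Δ x n) = LinearMap.id := by
  apply Finsupp.lhom_ext
  intro a c
  simp only [LinearMap.comp_apply, LinearMap.add_apply, LinearMap.id_apply]
  rw [single_eq_smul_felem]
  simp only [map_smul]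
  rw [← smul_add]
  congr 1
  rw [phi_felem, dif_pos a.2, psi_felem, dif_pos a.2]
  by_cases hxF : x ∈ a.1
  · rw [felem_of_not k (fun hc => hc.1.2 hxF), map_zero, map_smul]
    have hce : (a.1.erase x).card = n := by
      have := a.2.2
      rw [Finset.card_erase_of_mem hxF]
      omega
    rw [sig_felem, dif_pos ⟨lk_face_of_mem a.2.1 hxF, hce⟩,
      Finset.insert_erase hxF, smul_smul, sgn_sq, one_smul, zero_add]
  · have hnot4 : ¬(lkC Δ x a.1 ∧ a.1.card = n) := by
      rintro ⟨-, hc⟩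
      have := a.2.2
      omega
    rw [Finset.erase_eq_of_notMem hxF,
      felem_of_not k hnot4, smul_zero, map_zero]
    rw [iot_felem, dif_pos ⟨⟨a.2.1, hxF⟩, a.2.2⟩, add_zero]

end RegAux

namespace RegAux

variable {V : Type} [LinearOrder V] (k : Type) [Field k]

/-- contracting homotopy for a cone with apex `x`. -/
def coneH (Δ : Finset V → Prop) (x : V) (n : ℕ) :
    (Faces Δ n →₀ k) →ₗ[k] (Faces Δ (n + 1) →₀ k) :=
  mkMap k (fun F => if x ∈ F then 0
    else sgn k (insert x F) x • felem k Δ (n + 1) (insert x F))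

lemma coneH_felem (Δ : Finset V → Prop) (x : V) (n : ℕ) (E : Finset V) :
    coneH k Δ x n (felem k Δ n E) =
      if _ : Δ E ∧ E.card = n then
        (if x ∈ E then 0 else sgn k (insert x E) x • felem k Δ (n + 1) (insert x E))
      else 0 :=
  mkMap_felem k _ E

lemma bdry_coneH_zero {Δ : Finset V → Prop} (hΔ : IsComplex Δ) {x : V}
    (hcone : ∀ F, Δ F → Δ (insert x F)) :
    (cxBoundary k Δ 0).comp (coneH k Δ x 0) = LinearMap.id := by
  apply Finsupp.lhom_ext
  rintro ⟨F, hF, hFc⟩ c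
  obtain rfl : F = ∅ := Finset.card_eq_zero.1 hFc
  simp only [LinearMap.comp_apply, LinearMap.id_apply]
  erw [single_eq_smul_felem]
  simp only [map_smul]
  congr 1
  rw [coneH_felem, dif_pos ⟨hF, hFc⟩, if_neg (Finset.notMem_empty x), map_smul,
    bdry_felem k hΔ 0 (hcone _ hF) (by simp),
    Finset.sum_insert (Finset.notMem_empty x), Finset.sum_empty, add_zero,
    Finset.erase_insert (Finset.notMem_empty x), smul_smul, sgn_sq, one_smul]

lemma bdry_coneH {Δ : Finset V → Prop} (hΔ : IsComplex Δ) {x : V}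
    (hcone : ∀ F, Δ F → Δ (insert x F)) (n : ℕ) :
    (cxBoundary k Δ (n + 1)).comp (coneH k Δ x (n + 1)) +
      (coneH k Δ x n).comp (cxBoundary k Δ n) = LinearMap.id := by
  apply Finsupp.lhom_ext
  intro a c
  simp only [LinearMap.comp_apply, LinearMap.add_apply, LinearMap.id_apply]
  rw [single_eq_smul_felem]
  simp only [map_smul]
  rw [← smul_add]
  congr 1
  rw [coneH_felem, dif_pos a.2, bdry_felem k hΔ n a.2.1 a.2.2, map_sum]
  by_cases hxF : x ∈ a.1
  · rw [if_pos hxF, map_zero, zero_add]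
    rw [Finset.sum_eq_single_of_mem x hxF
      (f := fun z => (coneH k Δ x n) (sgn k a.1 z • felem k Δ n (a.1.erase z)))
      (by
        intro z hz hzx
        show (coneH k Δ x n) (sgn k a.1 z • felem k Δ n (a.1.erase z)) = 0
        rw [map_smul, coneH_felem, dif_pos ⟨hΔ a.2.1 (Finset.erase_subset _ _),
          by rw [Finset.card_erase_of_mem hz, a.2.2]; omega⟩,
          if_pos (Finset.mem_erase.2 ⟨Ne.symm hzx, hxF⟩)]
        simp)]
    rw [map_smul, coneH_felem, dif_pos ⟨hΔ a.2.1 (Finset.erase_subset _ _),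
      by rw [Finset.card_erase_of_mem hxF, a.2.2]; omega⟩,
      if_neg (Finset.notMem_erase _ _), Finset.insert_erase hxF,
      smul_smul, sgn_sq, one_smul]
  · rw [if_neg hxF, map_smul]
    have hF' : Δ (insert x a.1) := hcone _ a.2.1
    have hF'c : (insert x a.1).card = n + 1 + 1 := by
      rw [Finset.card_insert_of_notMem hxF, a.2.2]
    rw [bdry_felem k hΔ (n + 1) hF' hF'c, Finset.sum_insert hxF,
      Finset.erase_insert hxF, smul_add, smul_smul, sgn_sq, one_smul]
    have hterm : ∀ z ∈ a.1,
        (coneH k Δ x n) (sgn k a.1 z • felem k Δ n (a.1.erase z)) =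
          (-(sgn k (insert x a.1) x * sgn k (insert x a.1) z)) •
            felem k Δ (n + 1) ((insert x a.1).erase z) := by
      intro z hz
      have hzx : z ≠ x := fun h => hxF (h ▸ hz)
      rw [map_smul, coneH_felem, dif_pos ⟨hΔ a.2.1 (Finset.erase_subset _ _),
        by rw [Finset.card_erase_of_mem hz, a.2.2]; omega⟩,
        if_neg (fun hc => hxF (Finset.mem_of_mem_erase hc)),
        ← Finset.erase_insert_of_ne (Ne.symm hzx), smul_smul]
      congr 1
      have h1 : z ∈ insert x a.1 := Finset.mem_insert_of_mem hz
      have h2 : x ∈ insert x a.1 := Finset.mem_insert_self _ _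
      rw [sgn_mul_antisymm' k (insert x a.1) h2 h1 (fun h => hzx h.symm), neg_neg,
        Finset.erase_insert hxF]
    rw [Finset.sum_congr rfl hterm, Finset.smul_sum]
    simp only [smul_smul]
    rw [add_assoc, ← Finset.sum_add_distrib]
    have hzero : ∀ z ∈ a.1,
        ((sgn k (insert x a.1) x * sgn k (insert x a.1) z) •
            felem k Δ (n + 1) ((insert x a.1).erase z) +
          (-(sgn k (insert x a.1) x * sgn k (insert x a.1) z)) •
            felem k Δ (n + 1) ((insert x a.1).erase z)) = 0 := by
      intro z hz
      rw [← add_smul]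
      simp
    rw [Finset.sum_congr rfl hzero, Finset.sum_const_zero, add_zero]

lemma cone_kill {Δ : Finset V → Prop} (hΔ : IsComplex Δ) {x : V}
    (hcone : ∀ F, Δ F → Δ (insert x F)) (m : ℕ) : ¬ HNontrivial k Δ m := by
  intro h
  apply h
  intro z hz
  cases m with
  | zero =>
    refine ⟨coneH k Δ x 0 z, ?_⟩
    have := congrArg (fun f => f z) (bdry_coneH_zero k hΔ hcone)
    simpa using this
  | succ n =>
    refine ⟨coneH k Δ x (n + 1) z, ?_⟩
    have hker : cxBoundary k Δ n z = 0 := LinearMap.mem_ker.1 hz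
    have := congrArg (fun f => f z) (bdry_coneH k hΔ hcone n)
    simp only [LinearMap.comp_apply, LinearMap.add_apply, LinearMap.id_apply] at this
    rw [hker, map_zero, add_zero] at this
    exact this

lemma not_hnontrivial_of_no_faces {Δ : Finset V → Prop} (m : ℕ)
    (he : IsEmpty (Faces Δ (m + 1))) : ¬ HNontrivial k Δ (m + 1) := by
  intro h
  apply h
  intro z _
  have hz0 : z = 0 := by
    ext a
    exact (he.false a).elim
  rw [hz0]
  exact Submodule.zero_mem _

end RegAux

namespace RegAux

variable {V : Type} [LinearOrder V] (k : Type) [Field k]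

theorem deletion_link {Δ : Finset V → Prop} (hΔ : IsComplex Δ) (x : V) (m : ℕ)
    (h : HNontrivial k Δ (m + 1)) :
    HNontrivial k (delC Δ x) (m + 1) ∨ HNontrivial k (lkC Δ x) m := by
  obtain ⟨z, hz_cyc, hz_nr⟩ := SetLike.not_le_iff_exists.1 h
  have hzker : cxBoundary k Δ m z = 0 := LinearMap.mem_ker.1 hz_cyc
  set w := psi k Δ x m z with hw
  have hw_cyc : w ∈ cxCycles k (lkC Δ x) m := by
    cases m with
    | zero => exact Submodule.mem_top
    | succ n =>
      show w ∈ LinearMap.ker (cxBoundary k (lkC Δ x) n)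
      rw [LinearMap.mem_ker]
      have := congrArg (fun f => f z) (psi_bdry k hΔ x n)
      simp only [LinearMap.comp_apply, LinearMap.neg_apply] at this
      rw [hzker, map_zero] at this
      have := this.symm
      rw [neg_eq_zero] at this
      exact this
  by_cases hwr : w ∈ LinearMap.range (cxBoundary k (lkC Δ x) m)
  · -- use the deletion
    obtain ⟨u, hu⟩ := hwr
    set z' := z + cxBoundary k Δ (m + 1) (sig k Δ x (m + 1) u) with hz'
    have hψz' : psi k Δ x m z' = 0 := by
      rw [hz', map_add]
      have h2 := congrArg (fun f => f (sig k Δ x (m + 1) u)) (psi_bdry k hΔ x m)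
      simp only [LinearMap.comp_apply, LinearMap.neg_apply] at h2
      rw [h2]
      have h3 := congrArg (fun f => f u) (psi_sig k (Δ := Δ) x (m + 1))
      simp only [LinearMap.comp_apply, LinearMap.id_apply] at h3
      rw [h3, hu, ← hw]
      exact add_neg_cancel w
    set z₀ := phi k Δ x (m + 1) z' with hz₀
    have hιz₀ : iot k Δ x (m + 1) z₀ = z' := by
      have h4 := congrArg (fun f => f z') (iot_phi_add_sig_psi k (Δ := Δ) x m)
      simp only [LinearMap.comp_apply, LinearMap.add_apply, LinearMap.id_apply] at h4
      rw [hψz', map_zero, add_zero] at h4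
      exact h4
    have hbz' : cxBoundary k Δ m z' = 0 := by
      rw [hz', map_add, hzker, zero_add]
      have h5 := congrArg (fun f => f (sig k Δ x (m + 1) u)) (bdry_bdry k hΔ m)
      simpa using h5
    left
    intro hle
    have hz₀cyc : z₀ ∈ cxCycles k (delC Δ x) (m + 1) := by
      show z₀ ∈ LinearMap.ker (cxBoundary k (delC Δ x) m)
      rw [LinearMap.mem_ker]
      have h6 := congrArg (fun f => f z₀) (bdry_iot k hΔ x m)
      simp only [LinearMap.comp_apply] at h6
      rw [hιz₀, hbz'] at h6
      -- h6 : 0 = iot (cxBoundary del m z₀)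
      have h7 : iot k Δ x m (cxBoundary k (delC Δ x) m z₀) = 0 := h6.symm
      -- iot is injective via phi
      have h8 := congrArg (fun f => f (cxBoundary k (delC Δ x) m z₀))
        (phi_iot k Δ x m)
      simp only [LinearMap.comp_apply, LinearMap.id_apply] at h8
      rw [h7, map_zero] at h8
      exact h8.symm
    obtain ⟨v, hv⟩ := hle hz₀cyc
    apply hz_nr
    refine ⟨iot k Δ x (m + 2) v - sig k Δ x (m + 1) u, ?_⟩
    rw [map_sub]
    have h9 := congrArg (fun f => f v) (bdry_iot k hΔ x (m + 1))
    simp only [LinearMap.comp_apply] at h9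
    rw [h9, hv, hιz₀, hz']
    abel
  · right
    intro hle
    exact hwr (hle hw_cyc)

end RegAux

namespace RegAux

open SimpleGraph

lemma exists_leaf {W : Type} [Fintype W] {H : SimpleGraph W} (hac : H.IsAcyclic)
    {u v : W} (huv : H.Adj u v) :
    ∃ x y, H.Adj x y ∧ ∀ z, H.Adj x z → z = y := by
  classical
  set L := {n : ℕ | ∃ (a b : W) (w : H.Walk a b), w.IsPath ∧ w.length = n} with hL
  have hne : 1 ∈ L := by
    refine ⟨u, v, Walk.cons huv Walk.nil, ?_, rfl⟩
    rw [Walk.cons_isPath_iff]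
    simp [huv.ne]
  have hbdd : BddAbove L := by
    refine ⟨Fintype.card W, ?_⟩
    rintro n ⟨a, b, w, hw, rfl⟩
    exact le_of_lt hw.length_lt
  obtain ⟨a, b, p, hp, hplen⟩ := Nat.sSup_mem ⟨1, hne⟩ hbdd
  have hN1 : 1 ≤ sSup L := le_csSup hbdd hne
  cases p with
  | nil =>
    rw [Walk.length_nil] at hplen
    omega
  | @cons _ c _ h p' =>
    refine ⟨a, c, h, fun z hz => ?_⟩
    by_contra hzc
    by_cases hzs : z ∈ (Walk.cons h p').support
    · set q := (Walk.cons h p').takeUntil z hzs with hq_def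
      have hq : q.IsPath := hp.takeUntil _
      have hedge : s(a, z) ∉ q.edges := by
        intro hmem
        have hmem' : s(a, z) ∈ (Walk.cons h p').edges :=
          Walk.edges_takeUntil_subset _ hzs hmem
        rw [Walk.edges_cons] at hmem'
        rcases List.mem_cons.1 hmem' with h1 | h2
        · rw [Sym2.eq_iff] at h1
          rcases h1 with ⟨-, h1⟩ | ⟨h1, -⟩
          · exact hzc h1
          · exact h.ne h1
        · have ha : a ∈ p'.support := Walk.fst_mem_support_of_mem_edges p' h2
          exact ((Walk.cons_isPath_iff _ _).1 hp).2 ha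
      have hcyc : (Walk.cons hz q.reverse).IsCycle := by
        rw [Walk.cons_isCycle_iff]
        refine ⟨hq.reverse, ?_⟩
        rw [Walk.edges_reverse]
        simpa using hedge
      exact hac _ hcyc
    · have hlong : (Walk.cons hz.symm (Walk.cons h p')).IsPath :=
        (Walk.cons_isPath_iff _ _).2 ⟨hp, hzs⟩
      have hmem : (Walk.cons hz.symm (Walk.cons h p')).length ∈ L :=
        ⟨z, b, _, hlong, rfl⟩
      have hle := le_csSup hbdd hmem
      rw [Walk.length_cons, hplen] at hle
      omega

end RegAux

namespace RegAux

variable {V : Type} [Fintype V]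

lemma isComplex_restrict_indep (G : SimpleGraph V) (A : Set V) :
    IsComplex (restrictC (indepFaces G) A) := by
  intro F F' hF hsub
  exact ⟨fun z hz => hF.1 (hsub hz), fun u hu v hv => hF.2 u (hsub hu) v (hsub hv)⟩

lemma delC_restrict_eq (G : SimpleGraph V) (S : Finset V) (x : V) :
    delC (restrictC (indepFaces G) ↑S) x =
      restrictC (indepFaces G) ↑(S.erase x) := by
  funext F
  apply propext
  constructor
  · rintro ⟨⟨hsub, hind⟩, hx⟩
    refine ⟨fun z hz => ?_, hind⟩
    have hzF : z ∈ F := hz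
    simp only [Finset.coe_erase, Set.mem_diff, Set.mem_singleton_iff]
    exact ⟨hsub hz, fun h => hx (h ▸ hzF)⟩
  · rintro ⟨hsub, hind⟩
    refine ⟨⟨fun z hz => ?_, hind⟩, fun hx => ?_⟩
    · have := hsub hz
      simp only [Finset.coe_erase, Set.mem_diff] at this
      exact this.1
    · have := hsub hx
      simp at this

lemma lkC_restrict_eq (G : SimpleGraph V) (S : Finset V) (x : V) (hxS : x ∈ S) :
    lkC (restrictC (indepFaces G) ↑S) x =
      restrictC (indepFaces G) ↑(S.filter (fun z => ¬(z = x ∨ G.Adj x z))) := by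
  funext F
  apply propext
  constructor
  · rintro ⟨hxF, hsub, hind⟩
    refine ⟨fun z hz => ?_, fun u hu v hv => hind u ?_ v ?_⟩
    · have hzF : z ∈ F := hz
      simp only [Finset.coe_filter, Set.mem_setOf_eq]
      refine ⟨hsub (by simp [Finset.mem_insert, hzF]), ?_⟩
      rintro (rfl | hadj)
      · exact hxF hzF
      · exact hind x (by simp [Finset.mem_insert]) z
          (by simp [Finset.mem_insert, hzF]) hadj
    · simp [Finset.mem_insert, hu]
    · simp [Finset.mem_insert, hv]
  · rintro ⟨hsub, hind⟩
    have hxT : ∀ z ∈ F, ¬(z = x ∨ G.Adj x z) := by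
      intro z hz
      have := hsub hz
      simp only [Finset.coe_filter, Set.mem_setOf_eq] at this
      exact this.2
    have hxF : x ∉ F := fun hx => hxT x hx (Or.inl rfl)
    refine ⟨hxF, fun z hz => ?_, fun u hu v hv => ?_⟩
    · simp only [Finset.mem_coe, Finset.mem_insert] at hz
      rcases hz with rfl | hz
      · exact hxS
      · have := hsub hz
        simp only [Finset.coe_filter, Set.mem_setOf_eq] at this
        exact this.1
    · simp only [Finset.mem_insert] at hu hv
      rcases hu with rfl | hu <;> rcases hv with rfl | hv
      · exact fun h => G.irrefl h
      · exact fun h => hxT v hv (Or.inr h)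
      · exact fun h => hxT u hu (Or.inr h.symm)
      · exact hind u hu v hv

/-- the largest size of an induced matching inside `S`. -/
def imIn (G : SimpleGraph V) (S : Finset V) : ℕ :=
  sSup {n : ℕ | ∃ M : Finset (V × V), IsInducedMatching G M ∧
    (∀ p ∈ M, p.1 ∈ S ∧ p.2 ∈ S) ∧ M.card = n}

lemma imIn_zero_mem (G : SimpleGraph V) (S : Finset V) :
    0 ∈ {n : ℕ | ∃ M : Finset (V × V), IsInducedMatching G M ∧
      (∀ p ∈ M, p.1 ∈ S ∧ p.2 ∈ S) ∧ M.card = n} := by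
  refine ⟨∅, ⟨?_, ?_⟩, ?_, rfl⟩ <;> simp

lemma imIn_bdd (G : SimpleGraph V) (S : Finset V) :
    BddAbove {n : ℕ | ∃ M : Finset (V × V), IsInducedMatching G M ∧
      (∀ p ∈ M, p.1 ∈ S ∧ p.2 ∈ S) ∧ M.card = n} := by
  refine ⟨Fintype.card (V × V), ?_⟩
  rintro n ⟨M, -, -, rfl⟩
  exact Finset.card_le_univ M

lemma imIn_attained (G : SimpleGraph V) (S : Finset V) :
    ∃ M : Finset (V × V), IsInducedMatching G M ∧
      (∀ p ∈ M, p.1 ∈ S ∧ p.2 ∈ S) ∧ M.card = imIn G S :=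
  Nat.sSup_mem ⟨0, imIn_zero_mem G S⟩ (imIn_bdd G S)

lemma imIn_mono (G : SimpleGraph V) {S S' : Finset V} (h : S ⊆ S') :
    imIn G S ≤ imIn G S' := by
  apply csSup_le_csSup (imIn_bdd G S') ⟨0, imIn_zero_mem G S⟩
  rintro n ⟨M, hM, hMS, rfl⟩
  exact ⟨M, hM, fun p hp => ⟨h (hMS p hp).1, h (hMS p hp).2⟩, rfl⟩

/-- the least size of a decycling set inside `S`. -/
def nablaIn (G : SimpleGraph V) (S : Finset V) : ℕ :=
  sInf {n : ℕ | ∃ D : Finset V, D ⊆ S ∧ D.card = n ∧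
    (G.induce {v : V | v ∈ S ∧ v ∉ D}).IsAcyclic}

lemma nablaIn_set_nonempty (G : SimpleGraph V) (S : Finset V) :
    {n : ℕ | ∃ D : Finset V, D ⊆ S ∧ D.card = n ∧
      (G.induce {v : V | v ∈ S ∧ v ∉ D}).IsAcyclic}.Nonempty := by
  refine ⟨S.card, S, Finset.Subset.refl S, rfl, ?_⟩
  intro v c hc
  exact (v.2.2 v.2.1).elim

lemma nablaIn_attained (G : SimpleGraph V) (S : Finset V) :
    ∃ D : Finset V, D ⊆ S ∧ D.card = nablaIn G S ∧
      (G.induce {v : V | v ∈ S ∧ v ∉ D}).IsAcyclic :=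
  Nat.sInf_mem (nablaIn_set_nonempty G S)

lemma induce_acyclic_mono (G : SimpleGraph V) {A B : Set V} (hAB : A ⊆ B)
    (h : (G.induce B).IsAcyclic) : (G.induce A).IsAcyclic := by
  classical
  intro v c hc
  let f : G.induce A →g G.induce B :=
    ⟨fun w => ⟨w.1, hAB w.2⟩, fun hadj => hadj⟩
  have hinj : Function.Injective f := by
    intro w w' hww
    apply Subtype.ext
    have h2 : (f w).1 = (f w').1 := congrArg Subtype.val hww
    exact h2
  exact h _ (hc.map hinj)

lemma nablaIn_mono (G : SimpleGraph V) {S S' : Finset V} (h : S ⊆ S') :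
    nablaIn G S ≤ nablaIn G S' := by
  obtain ⟨D', hD'sub, hD'card, hD'ac⟩ := nablaIn_attained G S'
  have hmem : (D' ∩ S).card ∈ {n : ℕ | ∃ D : Finset V, D ⊆ S ∧ D.card = n ∧
      (G.induce {v : V | v ∈ S ∧ v ∉ D}).IsAcyclic} := by
    refine ⟨D' ∩ S, Finset.inter_subset_right, rfl, ?_⟩
    refine induce_acyclic_mono G ?_ hD'ac
    rintro v ⟨hvS, hvD⟩
    exact ⟨h hvS, fun hv => hvD (Finset.mem_inter.2 ⟨hv, hvS⟩)⟩
  calc nablaIn G S ≤ (D' ∩ S).card := Nat.sInf_le hmem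
    _ ≤ D'.card := Finset.card_le_card Finset.inter_subset_left
    _ = nablaIn G S' := hD'card

end RegAux

namespace RegAux

variable {V : Type} [Fintype V]

lemma nablaIn_zero_acyclic (G : SimpleGraph V) {S : Finset V}
    (h : nablaIn G S = 0) : (G.induce {v : V | v ∈ S}).IsAcyclic := by
  obtain ⟨D, hDsub, hDcard, hDac⟩ := nablaIn_attained G S
  rw [h, Finset.card_eq_zero] at hDcard
  subst hDcard
  refine induce_acyclic_mono G ?_ hDac
  intro v hv
  exact ⟨hv, by simp⟩

lemma nablaIn_link (G : SimpleGraph V) {S D : Finset V} {x : V}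
    (hDsub : D ⊆ S)
    (hDac : (G.induce {v : V | v ∈ S ∧ v ∉ D}).IsAcyclic) (hx : x ∈ D) :
    nablaIn G (S.filter (fun z => ¬(z = x ∨ G.Adj x z))) ≤ D.card - 1 := by
  set T := S.filter (fun z => ¬(z = x ∨ G.Adj x z)) with hT
  have hmem : (D ∩ T).card ∈ {n : ℕ | ∃ D' : Finset V, D' ⊆ T ∧ D'.card = n ∧
      (G.induce {v : V | v ∈ T ∧ v ∉ D'}).IsAcyclic} := by
    refine ⟨D ∩ T, Finset.inter_subset_right, rfl, ?_⟩
    refine induce_acyclic_mono G ?_ hDac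
    rintro v ⟨hvT, hvD⟩
    exact ⟨Finset.filter_subset _ _ hvT, fun hv => hvD (Finset.mem_inter.2 ⟨hv, hvT⟩)⟩
  have h1 : nablaIn G T ≤ (D ∩ T).card := Nat.sInf_le hmem
  have h2 : D ∩ T ⊆ D.erase x := by
    intro z hz
    rw [Finset.mem_inter] at hz
    refine Finset.mem_erase.2 ⟨?_, hz.1⟩
    have := (Finset.mem_filter.1 hz.2).2
    intro hzx
    exact this (Or.inl hzx)
  calc nablaIn G T ≤ (D ∩ T).card := h1
    _ ≤ (D.erase x).card := Finset.card_le_card h2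
    _ = D.card - 1 := Finset.card_erase_of_mem hx

lemma imIn_leaf_succ (G : SimpleGraph V) {S : Finset V} {x y : V}
    (hx : x ∈ S) (hy : y ∈ S) (hadj : G.Adj x y)
    (hleaf : ∀ z ∈ S, G.Adj x z → z = y) :
    imIn G (S.filter (fun z => ¬(z = y ∨ G.Adj y z))) + 1 ≤ imIn G S := by
  classical
  set T := S.filter (fun z => ¬(z = y ∨ G.Adj y z)) with hT
  obtain ⟨M, hM, hMT, hMcard⟩ := imIn_attained G T
  have hTprop : ∀ z ∈ T, z ≠ y ∧ ¬G.Adj y z := by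
    intro z hz
    have := (Finset.mem_filter.1 hz).2
    push_neg at this
    exact this
  have hTS : T ⊆ S := Finset.filter_subset _ _
  have hxT : x ∉ T := by
    intro hmem
    exact (hTprop x hmem).2 hadj.symm
  have hyT : y ∉ T := by
    intro hmem
    exact (hTprop y hmem).1 rfl
  have hnadjx : ∀ z ∈ T, ¬G.Adj x z := by
    intro z hz hadj'
    exact (hTprop z hz).1 (hleaf z (hTS hz) hadj')
  have hxyM : (x, y) ∉ M := fun hmem => hxT (hMT _ hmem).1
  have hfacts : ∀ q ∈ M,
      x ≠ q.1 ∧ x ≠ q.2 ∧ y ≠ q.1 ∧ y ≠ q.2 ∧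
      ¬G.Adj x q.1 ∧ ¬G.Adj x q.2 ∧ ¬G.Adj y q.1 ∧ ¬G.Adj y q.2 := by
    intro q hq
    obtain ⟨hq1, hq2⟩ := hMT q hq
    exact ⟨fun h => hxT (h ▸ hq1), fun h => hxT (h ▸ hq2),
      fun h => hyT (h ▸ hq1), fun h => hyT (h ▸ hq2),
      hnadjx _ hq1, hnadjx _ hq2, (hTprop _ hq1).2, (hTprop _ hq2).2⟩
  have hM' : IsInducedMatching G (insert (x, y) M) := by
    constructor
    · intro p hp
      rcases Finset.mem_insert.1 hp with rfl | hp
      · exact hadj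
      · exact hM.1 p hp
    · intro p hp q hq hne
      rcases Finset.mem_insert.1 hp with rfl | hp <;>
        rcases Finset.mem_insert.1 hq with rfl | hq
      · exact absurd rfl hne
      · obtain ⟨f1, f2, f3, f4, f5, f6, f7, f8⟩ := hfacts q hq
        exact ⟨f1, f2, f3, f4, f5, f6, f7, f8⟩
      · obtain ⟨f1, f2, f3, f4, f5, f6, f7, f8⟩ := hfacts p hp
        exact ⟨f1.symm, f3.symm, f2.symm, f4.symm,
          fun h => f5 h.symm, fun h => f7 h.symm,
          fun h => f6 h.symm, fun h => f8 h.symm⟩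
      · exact hM.2 p hp q hq hne
  have hmem : M.card + 1 ∈ {n : ℕ | ∃ M' : Finset (V × V), IsInducedMatching G M' ∧
      (∀ p ∈ M', p.1 ∈ S ∧ p.2 ∈ S) ∧ M'.card = n} := by
    refine ⟨insert (x, y) M, hM', ?_, ?_⟩
    · intro p hp
      rcases Finset.mem_insert.1 hp with rfl | hp
      · exact ⟨hx, hy⟩
      · exact ⟨hTS (hMT p hp).1, hTS (hMT p hp).2⟩
    · rw [Finset.card_insert_of_notMem hxyM]
  have h5 : M.card + 1 ≤ imIn G S := le_csSup (imIn_bdd G S) hmem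
  omega

theorem master [LinearOrder V] (k : Type) [Field k] (G : SimpleGraph V) :
    ∀ S : Finset V, ∀ j : ℕ, HNontrivial k (restrictC (indepFaces G) ↑S) j →
      j ≤ imIn G S + nablaIn G S := by
  letI : DecidableEq V := fun a b => Classical.propDecidable (a = b)
  intro S
  induction S using Finset.strongInduction with
  | _ S IH =>
    intro j hj
    match j with
    | 0 => exact Nat.zero_le _
    | (m + 1) =>
      rcases Nat.eq_zero_or_pos (nablaIn G S) with hnab | hnab
      · -- G[S] is a forest
        have hac := nablaIn_zero_acyclic G hnab
        by_cases hedge : ∃ u ∈ S, ∃ w ∈ S, G.Adj u w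
        · obtain ⟨u, hu, w, hw, huw⟩ := hedge
          obtain ⟨x', y', hxy', huniq⟩ := exists_leaf hac
            (show (G.induce {v : V | v ∈ S}).Adj ⟨u, hu⟩ ⟨w, hw⟩ from huw)
          have hxS : x'.1 ∈ S := x'.2
          have hyS : y'.1 ∈ S := y'.2
          have hadj : G.Adj x'.1 y'.1 := hxy'
          have hleaf : ∀ z ∈ S, G.Adj x'.1 z → z = y'.1 := by
            intro z hz hzadj
            exact congrArg Subtype.val (huniq ⟨z, hz⟩ hzadj)
          rcases deletion_link k (isComplex_restrict_indep G ↑S) y'.1 m hj with hdel | hlink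
          · rw [delC_restrict_eq] at hdel
            have hIH := IH (S.erase y'.1) (Finset.erase_ssubset hyS) (m + 1) hdel
            have h1 := imIn_mono G (Finset.erase_subset y'.1 S)
            have h2 := nablaIn_mono G (Finset.erase_subset y'.1 S)
            omega
          · rw [lkC_restrict_eq G S y'.1 hyS] at hlink
            have hTss : S.filter (fun z => ¬(z = y'.1 ∨ G.Adj y'.1 z)) ⊂ S := by
              refine (Finset.ssubset_iff_of_subset (Finset.filter_subset _ _)).2
                ⟨y'.1, hyS, ?_⟩
              simp
            have hIH := IH _ hTss m hlink
            have h3 := imIn_leaf_succ G hxS hyS hadj hleaf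
            have h4 := nablaIn_mono G (Finset.filter_subset
              (fun z => ¬(z = y'.1 ∨ G.Adj y'.1 z)) S)
            omega
        · -- no edges within S
          push_neg at hedge
          rcases S.eq_empty_or_nonempty with rfl | ⟨x, hxS⟩
          · refine absurd hj (not_hnontrivial_of_no_faces k m ?_)
            constructor
            rintro ⟨F, ⟨hsub, -⟩, hcard⟩
            obtain ⟨z, hz⟩ := Finset.card_pos.1 (by omega : 0 < F.card)
            simpa using hsub hz
          · refine absurd hj (cone_kill k (isComplex_restrict_indep G ↑S) (x := x) ?_ (m + 1))
            rintro F ⟨hsub, hind⟩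
            refine ⟨?_, ?_⟩
            · intro z hz
              simp only [Finset.mem_coe, Finset.mem_insert] at hz
              rcases hz with rfl | hz
              · exact hxS
              · exact hsub hz
            · intro a ha b hb
              simp only [Finset.mem_insert] at ha hb
              have haS : a ∈ S := by
                rcases ha with rfl | ha
                · exact hxS
                · exact hsub ha
              have hbS : b ∈ S := by
                rcases hb with rfl | hb
                · exact hxS
                · exact hsub hb
              exact hedge a haS b hbS
      · -- there is a cycle; pick a vertex of a minimum decycling set
        obtain ⟨D, hDsub, hDcard, hDac⟩ := nablaIn_attained G S
        have hDne : D.Nonempty := Finset.card_pos.1 (by omega)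
        obtain ⟨x, hxD⟩ := hDne
        have hxS : x ∈ S := hDsub hxD
        rcases deletion_link k (isComplex_restrict_indep G ↑S) x m hj with hdel | hlink
        · rw [delC_restrict_eq] at hdel
          have hIH := IH (S.erase x) (Finset.erase_ssubset hxS) (m + 1) hdel
          have h1 := imIn_mono G (Finset.erase_subset x S)
          have h2 := nablaIn_mono G (Finset.erase_subset x S)
          omega
        · rw [lkC_restrict_eq G S x hxS] at hlink
          have hTss : S.filter (fun z => ¬(z = x ∨ G.Adj x z)) ⊂ S := by
            refine (Finset.ssubset_iff_of_subset (Finset.filter_subset _ _)).2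
              ⟨x, hxS, ?_⟩
            simp
          have hIH := IH _ hTss m hlink
          have h3 := nablaIn_link G hDsub hDac hxD
          have h4 := imIn_mono G (Finset.filter_subset
            (fun z => ¬(z = x ∨ G.Adj x z)) S)
          omega

end RegAux

namespace RegAux

theorem final_aux {V : Type} [Fintype V] [LinearOrder V] (k : Type) [Field k]
    (G : SimpleGraph V) :
    sSup {j : ℕ | ∃ S : Set V, HNontrivial k (restrictC (indepFaces G) S) j} ≤
      inducedMatchingNumber G + decyclingNumber G := by
  apply csSup_le'
  rintro j ⟨S, hS⟩
  rw [← Set.coe_toFinset S] at hS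
  have h := master k G S.toFinset j hS
  have h1 := imIn_mono G (Finset.subset_univ S.toFinset)
  have h2 := nablaIn_mono G (Finset.subset_univ S.toFinset)
  have h3 : imIn G (Finset.univ : Finset V) ≤ inducedMatchingNumber G := by
    apply csSup_le_csSup ?bdd ⟨0, imIn_zero_mem G _⟩
    · rintro n ⟨M, hM, -, rfl⟩
      exact ⟨M, hM, rfl⟩
    case bdd =>
      refine ⟨Fintype.card (V × V), ?_⟩
      rintro n ⟨M, -, rfl⟩
      exact Finset.card_le_univ M
  have h4 : nablaIn G (Finset.univ : Finset V) ≤ decyclingNumber G := by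
    obtain ⟨D, hDcard, hDac⟩ := Nat.sInf_mem
      (s := {n : ℕ | ∃ D : Finset V, D.card = n ∧
        (G.induce {v : V | v ∉ D}).IsAcyclic})
      ⟨Fintype.card V, Finset.univ, Finset.card_univ,
        fun v c hc => (v.2 (Finset.mem_univ _)).elim⟩
    have hle : nablaIn G Finset.univ ≤ D.card :=
      Nat.sInf_le ⟨D, Finset.subset_univ D, rfl,
        induce_acyclic_mono G (fun v hv => hv.2) hDac⟩
    rw [hDcard] at hle
    exact hle
  omega

end RegAux

end Aux

/-- For any graph `G`, `reg(G) ≤ im(G) + ∇(G)`. -/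
theorem gReg_le_im_add_decycling {V : Type} [Fintype V] (k : Type) [Field k]
    (G : SimpleGraph V) :
    gReg k G ≤ inducedMatchingNumber G + decyclingNumber G := by
  letI : LinearOrder V :=
    LinearOrder.lift' (Fintype.equivFin V) (Fintype.equivFin V).injective
  exact RegAux.final_aux k G
end

section
/- For any graph G, the induced matching number of the full whisker graph equals the independence number of G: im(W(G)) = α(G). -/
open scoped Classical

lemma wadj {V : Type} (G : SimpleGraph V) (a b : V ⊕ V) :
    (whiskerGraph G).Adj a b ↔ a ≠ b ∧ (whiskerRel G a b ∨ whiskerRel G b a) :=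
  SimpleGraph.fromRel_adj _ a b

/-- For any graph `G`, `im(W(G)) = α(G)`. -/
theorem im_whisker_eq_indepNumber {V : Type} [Fintype V] (G : SimpleGraph V) :
    inducedMatchingNumber (whiskerGraph G) = indepNumber G := by
  unfold inducedMatchingNumber indepNumber
  congr 1
  ext n
  constructor
  · rintro ⟨M, ⟨hadj, hsep⟩, hcard⟩
    set f : (V ⊕ V) × (V ⊕ V) → V := fun p =>
      match p with
      | (Sum.inl u, _) => u
      | (Sum.inr _, Sum.inl v) => v
      | (Sum.inr u, Sum.inr _) => u with hf
    have hend : ∀ p ∈ M, Sum.inl (f p) = p.1 ∨ Sum.inl (f p) = p.2 := by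
      intro p hp
      have h := hadj p hp
      obtain ⟨p1, p2⟩ := p
      cases p1 with
      | inl u => left; rfl
      | inr u =>
        cases p2 with
        | inl v => right; rfl
        | inr v =>
          rw [wadj] at h
          simp [whiskerRel] at h
    refine ⟨M.image f, ?_, ?_⟩
    · intro u hu v hv
      simp only [Finset.mem_image] at hu hv
      obtain ⟨p, hp, hpu⟩ := hu
      obtain ⟨q, hq, hqv⟩ := hv
      by_cases hpq : p = q
      · subst hpq
        rw [← hpu, ← hqv]
        exact G.loopless.irrefl _
      · intro hGadj
        have h := hsep p hp q hq hpq
        have hw : (whiskerGraph G).Adj (Sum.inl u) (Sum.inl v) := by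
          rw [wadj]
          exact ⟨by simp [G.ne_of_adj hGadj], Or.inl hGadj⟩
        obtain ⟨h1, h2, h3, h4, h5, h6, h7, h8⟩ := h
        rcases hend p hp with hp1 | hp1 <;> rcases hend q hq with hq1 | hq1 <;>
          rw [hpu] at hp1 <;> rw [hqv] at hq1 <;> rw [hp1, hq1] at hw
        · exact h5 hw
        · exact h6 hw
        · exact h7 hw
        · exact h8 hw
    · rw [← hcard]
      apply Finset.card_image_of_injOn
      intro p hp q hq hfeq
      by_contra hpq
      obtain ⟨h1, h2, h3, h4, -⟩ := hsep p hp q hq hpq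
      rcases hend p hp with hp1 | hp1 <;> rcases hend q hq with hq1 | hq1 <;>
        rw [hfeq, hq1] at hp1
      · exact h1 hp1.symm
      · exact h2 hp1.symm
      · exact h3 hp1.symm
      · exact h4 hp1.symm
  · rintro ⟨s, hs, hcard⟩
    refine ⟨s.image (fun v => ((Sum.inl v : V ⊕ V), (Sum.inr v : V ⊕ V))), ⟨?_, ?_⟩, ?_⟩
    · intro p hp
      simp only [Finset.mem_image] at hp
      obtain ⟨v, hv, rfl⟩ := hp
      rw [wadj]
      exact ⟨by simp, Or.inl rfl⟩
    · intro p hp q hq hpq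
      simp only [Finset.mem_image] at hp hq
      obtain ⟨v, hv, rfl⟩ := hp
      obtain ⟨w, hw, rfl⟩ := hq
      have hvw : v ≠ w := by rintro rfl; exact hpq rfl
      have hnadj : ¬ G.Adj v w := hs v hv w hw
      refine ⟨by simp [hvw], by simp, by simp, by simp [hvw], ?_, ?_, ?_, ?_⟩ <;>
        rw [wadj] <;> rintro ⟨-, h | h⟩ <;>
        simp only [whiskerRel] at h <;> first
          | exact hnadj h
          | exact hnadj h.symm
          | exact hvw h
          | exact hvw h.symm
          | exact h
    · rw [← hcard]
      apply Finset.card_image_of_injOn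
      intro a _ b _ h
      simpa using congrArg Prod.fst h
end
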